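/- arXiv:0707.2421 — 3 statements merged into one kernel-verified Lean document; each statement's English description precedes it below -/
import Mathlib

section
/- For all integers a, b ≥ 0, the following identity holds in the Laurent polynomial ring ℤ[x, x⁻¹, y, y⁻¹]: (x y − x⁻¹ y² − x³ y⁻¹ + x⁻³ y² + x³ y⁻² − x⁻³ y − x y⁻² + x⁻¹ y⁻¹) · Σ_{T ∈ S_C2(a,b)} x^{n_1(T) − n_2(T) + n_3(T) − n_4(T)} y^{n_2(T) − n_3(T)} = x^{a+1} y^{b+1} − x^{−(a+1)} y^{a+b+2} − x^{a+2b+3} y^{−(b+1)} + x^{−(a+2b+3)} y^{a+b+2} + x^{a+2b+3} y^{−(a+b+2)} − x^{−(a+2b+3)} y^{b+1} − x^{a+1} y^{−(a+b+2)} + x^{−(a+1)} y^{−(b+1)}. (By the Weyl character formula, this says that the weight generating function of S_C2(a,b) is the Weyl character of the irreducible representation of the simple Lie algebra C2 with highest weight a ω_α + b ω_β, written in the variables x = e^{ω_α}, y = e^{ω_β}.) -/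
/-- A filling of the shape with `b` columns of length two (each recorded as
(top entry, bottom entry)) followed by `a` columns of length one. -/
abbrev TabT (a b : ℕ) : Type := (Fin b → ℕ × ℕ) × (Fin a → ℕ)

/-- `n_k(T)`: the number of entries of the tableau `T` equal to `k`. -/
def nkOf {m n : ℕ} (T : (Fin m → ℕ × ℕ) × (Fin n → ℕ)) (k : ℕ) : ℕ :=
  (Finset.univ.filter fun j : Fin m => (T.1 j).1 = k).card +
    (Finset.univ.filter fun j : Fin m => (T.1 j).2 = k).card +
    (Finset.univ.filter fun i : Fin n => T.2 i = k).card

/-- The set of `A2`-semistandard tableaux of shape `(a,b)`: entries from `{1,2,3}`,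
rows weakly increasing, columns strictly increasing. -/
def SA2 (a b : ℕ) : Set (TabT a b) :=
  {T | (∀ j : Fin b, 1 ≤ (T.1 j).1 ∧ (T.1 j).1 ≤ 3 ∧ 1 ≤ (T.1 j).2 ∧ (T.1 j).2 ≤ 3 ∧
          (T.1 j).1 < (T.1 j).2) ∧
       (∀ i : Fin a, 1 ≤ T.2 i ∧ T.2 i ≤ 3) ∧
       (∀ j j' : Fin b, j ≤ j' → (T.1 j).1 ≤ (T.1 j').1 ∧ (T.1 j).2 ≤ (T.1 j').2) ∧
       (∀ i i' : Fin a, i ≤ i' → T.2 i ≤ T.2 i') ∧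
       (∀ (j : Fin b) (i : Fin a), (T.1 j).1 ≤ T.2 i)}

/-- The set of `C2`-semistandard tableaux of shape `(a,b)`: entries from `{1,2,3,4}`,
rows weakly increasing, columns strictly increasing, no column equal to `(1,4)`,
and at most one column equal to `(2,3)`. -/
def SC2 (a b : ℕ) : Set (TabT a b) :=
  {T | (∀ j : Fin b, 1 ≤ (T.1 j).1 ∧ (T.1 j).1 ≤ 4 ∧ 1 ≤ (T.1 j).2 ∧ (T.1 j).2 ≤ 4 ∧
          (T.1 j).1 < (T.1 j).2) ∧
       (∀ i : Fin a, 1 ≤ T.2 i ∧ T.2 i ≤ 4) ∧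
       (∀ j j' : Fin b, j ≤ j' → (T.1 j).1 ≤ (T.1 j').1 ∧ (T.1 j).2 ≤ (T.1 j').2) ∧
       (∀ i i' : Fin a, i ≤ i' → T.2 i ≤ T.2 i') ∧
       (∀ (j : Fin b) (i : Fin a), (T.1 j).1 ≤ T.2 i) ∧
       (∀ j : Fin b, T.1 j ≠ (1, 4)) ∧
       (∀ j j' : Fin b, T.1 j = (2, 3) → T.1 j' = (2, 3) → j = j')}

/-- The restrictions of Figure 4.5 on a pair of adjacent length-two columns of a
`G2`-semistandard tableau. -/
def g2pair2 (c c' : ℕ × ℕ) : Prop :=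
  (c = (1, 4) → c' ≠ (1, 4) ∧ c' ≠ (1, 5) ∧ c' ≠ (1, 6) ∧ c' ≠ (1, 7)) ∧
  (c = (1, 5) → c' ≠ (1, 5) ∧ c' ≠ (1, 6) ∧ c' ≠ (1, 7)) ∧
  (c = (1, 6) → c' ≠ (1, 6) ∧ c' ≠ (1, 7) ∧ c' ≠ (2, 6) ∧ c' ≠ (2, 7)) ∧
  (c = (2, 6) → c' ≠ (2, 6) ∧ c' ≠ (2, 7)) ∧
  (c = (1, 7) → c' ≠ (1, 7) ∧ c' ≠ (2, 7) ∧ c' ≠ (3, 7) ∧ c' ≠ (4, 7)) ∧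
  (c = (2, 7) → c' ≠ (2, 7) ∧ c' ≠ (3, 7) ∧ c' ≠ (4, 7)) ∧
  (c = (3, 7) → c' ≠ (3, 7) ∧ c' ≠ (4, 7)) ∧
  (c = (4, 7) → c' ≠ (4, 7))

/-- The restrictions of Figure 4.5 on a length-two column followed by a
length-one column in a `G2`-semistandard tableau. -/
def g2pair1 (c : ℕ × ℕ) (e : ℕ) : Prop :=
  (c = (1, 4) → e ≠ 1) ∧
  (c = (1, 5) → e ≠ 1) ∧
  (c = (1, 6) → e ≠ 1 ∧ e ≠ 2) ∧
  (c = (2, 6) → e ≠ 2) ∧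
  (c = (1, 7) → e ≠ 1 ∧ e ≠ 2 ∧ e ≠ 3 ∧ e ≠ 4) ∧
  (c = (2, 7) → e ≠ 2 ∧ e ≠ 3 ∧ e ≠ 4) ∧
  (c = (3, 7) → e ≠ 3 ∧ e ≠ 4) ∧
  (c = (4, 7) → e ≠ 4)

/-- The set of `G2`-semistandard tableaux of shape `(a,b)`. -/
def SG2 (a b : ℕ) : Set (TabT a b) :=
  {T | (∀ j : Fin b, 1 ≤ (T.1 j).1 ∧ (T.1 j).1 ≤ 7 ∧ 1 ≤ (T.1 j).2 ∧ (T.1 j).2 ≤ 7 ∧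
          (T.1 j).1 < (T.1 j).2) ∧
       (∀ i : Fin a, 1 ≤ T.2 i ∧ T.2 i ≤ 7) ∧
       (∀ j j' : Fin b, j ≤ j' → (T.1 j).1 ≤ (T.1 j').1 ∧ (T.1 j).2 ≤ (T.1 j').2) ∧
       (∀ i i' : Fin a, i ≤ i' → T.2 i ≤ T.2 i') ∧
       (∀ (j : Fin b) (i : Fin a), (T.1 j).1 ≤ T.2 i) ∧
       (∀ i i' : Fin a, T.2 i = 4 → T.2 i' = 4 → i = i') ∧
       (∀ j : Fin b, T.1 j ≠ (2, 3) ∧ T.1 j ≠ (2, 4) ∧ T.1 j ≠ (3, 4) ∧ T.1 j ≠ (3, 5) ∧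
          T.1 j ≠ (4, 5) ∧ T.1 j ≠ (4, 6) ∧ T.1 j ≠ (5, 6)) ∧
       (∀ j j' : Fin b, (j' : ℕ) = (j : ℕ) + 1 → g2pair2 (T.1 j) (T.1 j')) ∧
       (∀ (j : Fin b) (i : Fin a), (j : ℕ) + 1 = b → (i : ℕ) = 0 → g2pair1 (T.1 j) (T.2 i))}

/-- The monomial `x^p y^q` in the Laurent polynomial ring `ℤ[x,x⁻¹,y,y⁻¹]`,
realized as the group algebra of `ℤ × ℤ` over `ℤ`. -/
noncomputable def mm (p q : ℤ) : AddMonoidAlgebra ℤ (ℤ × ℤ) :=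
  AddMonoidAlgebra.single (p, q) 1

set_option linter.unusedTactic false
set_option linter.unreachableTactic false

namespace C2pf

abbrev LP : Type := AddMonoidAlgebra ℤ (ℤ × ℤ)

lemma mm_mul (p q r s : ℤ) : mm p q * mm r s = mm (p + r) (q + s) := by
  simp [mm, AddMonoidAlgebra.single_mul_single, Prod.mk_add_mk]

noncomputable def wtC {a b : ℕ} (T : TabT a b) : LP :=
  mm ((nkOf T 1 : ℤ) - (nkOf T 2 : ℤ) + (nkOf T 3 : ℤ) - (nkOf T 4 : ℤ))
    ((nkOf T 2 : ℤ) - (nkOf T 3 : ℤ))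

def Pc (a b : ℕ) (c : ℕ × ℕ) (v : ℕ) : Set (TabT a b) :=
  {T | (∀ j : Fin b, 1 ≤ (T.1 j).1 ∧ (T.1 j).1 ≤ 4 ∧ 1 ≤ (T.1 j).2 ∧ (T.1 j).2 ≤ 4 ∧
          (T.1 j).1 < (T.1 j).2) ∧
       (∀ i : Fin a, 1 ≤ T.2 i ∧ T.2 i ≤ 4) ∧
       (∀ j j' : Fin b, j ≤ j' → (T.1 j).1 ≤ (T.1 j').1 ∧ (T.1 j).2 ≤ (T.1 j').2) ∧
       (∀ i i' : Fin a, i ≤ i' → T.2 i ≤ T.2 i') ∧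
       (∀ (j : Fin b) (i : Fin a), (T.1 j).1 ≤ T.2 i) ∧
       (∀ j : Fin b, T.1 j ≠ (1, 4)) ∧
       (∀ j j' : Fin b, T.1 j = (2, 3) → T.1 j' = (2, 3) → j = j') ∧
       (∀ j : Fin b, c.1 ≤ (T.1 j).1 ∧ c.2 ≤ (T.1 j).2) ∧
       (∀ i : Fin a, v ≤ T.2 i)}

lemma Pc_finite (a b : ℕ) (c : ℕ × ℕ) (v : ℕ) : (Pc a b c v).Finite := by
  apply Set.Finite.subset (Set.finite_range
    (fun g : (Fin b → Fin 5 × Fin 5) × (Fin a → Fin 5) =>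
      ((fun j => (((g.1 j).1 : ℕ), ((g.1 j).2 : ℕ)), fun i => ((g.2 i) : ℕ)) : TabT a b)))
  rintro T ⟨h1, h2, -⟩
  have hb1 : ∀ j, (T.1 j).1 < 5 := fun j => by have := h1 j; omega
  have hb2 : ∀ j, (T.1 j).2 < 5 := fun j => by have := h1 j; omega
  have hb3 : ∀ i, T.2 i < 5 := fun i => by have := h2 i; omega
  refine ⟨(fun j => (⟨(T.1 j).1, hb1 j⟩, ⟨(T.1 j).2, hb2 j⟩), fun i => ⟨T.2 i, hb3 i⟩), ?_⟩
  refine Prod.ext ?_ ?_ <;> funext j <;> simp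

noncomputable def PS (a b : ℕ) (c : ℕ × ℕ) (v : ℕ) : LP := ∑ᶠ T ∈ Pc a b c v, wtC T

lemma finsum_split {α : Type*} (s : Set α) (hs : s.Finite) (p : α → Prop) (f : α → LP) :
    ∑ᶠ x ∈ s, f x = (∑ᶠ x ∈ {x ∈ s | p x}, f x) + ∑ᶠ x ∈ {x ∈ s | ¬p x}, f x := by
  have hu : s = {x ∈ s | p x} ∪ {x ∈ s | ¬p x} := by
    ext x; by_cases hx : p x <;> simp [hx]
  conv_lhs => rw [hu]
  exact finsum_mem_union (Set.disjoint_left.mpr fun x hx hx' => hx'.2 hx.2)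
    (hs.subset (Set.sep_subset _ _)) (hs.subset (Set.sep_subset _ _))

lemma finsum_mul_const {α : Type*} (s : Set α) (hs : s.Finite) (C : LP) (f : α → LP) :
    ∑ᶠ x ∈ s, C * f x = C * ∑ᶠ x ∈ s, f x := by
  rw [← hs.coe_toFinset, finsum_mem_coe_finset, finsum_mem_coe_finset, Finset.mul_sum]

lemma card_filter_cons {n : ℕ} {β : Type*} (Q : β → Prop) [DecidablePred Q] (c : β)
    (g : Fin n → β) :
    (Finset.univ.filter fun j : Fin (n + 1) => Q ((Fin.cons c g : Fin (n+1) → β) j)).card =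
      (if Q c then 1 else 0) + (Finset.univ.filter fun j : Fin n => Q (g j)).card := by
  rw [Finset.card_filter, Finset.card_filter, Fin.sum_univ_succ]
  simp

lemma nkOf_consCol {a b : ℕ} (c : ℕ × ℕ) (T : TabT a b) (k : ℕ) :
    nkOf ((Fin.cons c T.1, T.2) : TabT a (b + 1)) k =
      ((if c.1 = k then 1 else 0) + (if c.2 = k then 1 else 0)) + nkOf T k := by
  classical
  unfold nkOf
  rw [show (Finset.univ.filter fun j : Fin (b+1) =>
        (((Fin.cons c T.1 : Fin (b+1) → ℕ × ℕ) j).1 = k)).card =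
      (if c.1 = k then 1 else 0) + (Finset.univ.filter fun j : Fin b => ((T.1 j).1 = k)).card
    from card_filter_cons (fun d : ℕ × ℕ => d.1 = k) c T.1]
  rw [show (Finset.univ.filter fun j : Fin (b+1) =>
        (((Fin.cons c T.1 : Fin (b+1) → ℕ × ℕ) j).2 = k)).card =
      (if c.2 = k then 1 else 0) + (Finset.univ.filter fun j : Fin b => ((T.1 j).2 = k)).card
    from card_filter_cons (fun d : ℕ × ℕ => d.2 = k) c T.1]
  ring

lemma nkOf_consRow {a b : ℕ} (r : ℕ) (T : TabT a b) (k : ℕ) :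
    nkOf ((T.1, Fin.cons r T.2) : TabT (a + 1) b) k = (if r = k then 1 else 0) + nkOf T k := by
  classical
  unfold nkOf
  rw [show (Finset.univ.filter fun i : Fin (a+1) =>
        ((Fin.cons r T.2 : Fin (a+1) → ℕ) i = k)).card =
      (if r = k then 1 else 0) + (Finset.univ.filter fun i : Fin a => (T.2 i = k)).card
    from card_filter_cons (fun d : ℕ => d = k) r T.2]
  ring

def wx (e : ℕ) : ℤ :=
  (if e = 1 then 1 else 0) - (if e = 2 then 1 else 0) + (if e = 3 then 1 else 0) -
    (if e = 4 then 1 else 0)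

def wy (e : ℕ) : ℤ := (if e = 2 then 1 else 0) - (if e = 3 then 1 else 0)

lemma wtC_consCol {a b : ℕ} (c : ℕ × ℕ) (T : TabT a b) :
    wtC ((Fin.cons c T.1, T.2) : TabT a (b + 1)) =
      mm (wx c.1 + wx c.2) (wy c.1 + wy c.2) * wtC T := by
  unfold wtC
  rw [mm_mul, nkOf_consCol, nkOf_consCol, nkOf_consCol, nkOf_consCol]
  congr 1 <;> (simp only [wx, wy]; push_cast; ring)

lemma wtC_consRow {a b : ℕ} (r : ℕ) (T : TabT a b) :
    wtC ((T.1, Fin.cons r T.2) : TabT (a + 1) b) = mm (wx r) (wy r) * wtC T := by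
  unfold wtC
  rw [mm_mul, nkOf_consRow, nkOf_consRow, nkOf_consRow, nkOf_consRow]
  congr 1 <;> (simp only [wx, wy]; push_cast; ring)

end C2pf

namespace C2pf

lemma pair_ne_iff (p : ℕ × ℕ) (x y : ℕ) : ¬(p = (x, y)) ↔ p.1 ≠ x ∨ p.2 ≠ y := by
  rw [Prod.ext_iff, not_and_or]

lemma tail_mem {a b : ℕ} {c : ℕ × ℕ} {v : ℕ} {T : TabT a (b + 1)}
    (hT : T ∈ Pc a (b + 1) c v) : ((Fin.tail T.1, T.2) : TabT a b) ∈ Pc a b c v := by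
  obtain ⟨h1, h2, h3, h4, h5, h6, h7, h8, h9⟩ := hT
  exact ⟨fun j => h1 j.succ, h2,
    fun j j' hj => h3 j.succ j'.succ (Fin.succ_le_succ_iff.mpr hj), h4,
    fun j i => h5 j.succ i, fun j => h6 j.succ,
    fun j j' e e' => Fin.succ_injective _ (h7 _ _ e e'), fun j => h8 j.succ, h9⟩

lemma cons_mem {a b v : ℕ} {c : ℕ × ℕ} (hc1 : 1 ≤ c.1) (hc2 : c.1 < c.2) (hc3 : c.2 ≤ 4)
    (hc4 : c ≠ (1, 4)) (hc5 : c ≠ (2, 3)) (hcv : c.1 ≤ v) {T : TabT a b}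
    (hT : T ∈ Pc a b c v) : ((Fin.cons c T.1, T.2) : TabT a (b + 1)) ∈ Pc a (b + 1) c v := by
  obtain ⟨h1, h2, h3, h4, h5, h6, h7, h8, h9⟩ := hT
  refine ⟨?_, h2, ?_, h4, ?_, ?_, ?_, ?_, h9⟩
  · intro j
    induction j using Fin.cases with
    | zero => simpa using ⟨hc1, by omega, by omega, hc3, hc2⟩
    | succ j => simpa using h1 j
  · intro j j' hj
    induction j using Fin.cases with
    | zero =>
      induction j' using Fin.cases with
      | zero => simp
      | succ j' => simpa using h8 j'
    | succ j =>
      induction j' using Fin.cases with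
      | zero =>
        exfalso
        have := Fin.le_def.mp hj
        simp at this
      | succ j' => simpa using h3 j j' (by rwa [Fin.succ_le_succ_iff] at hj)
  · intro j i
    induction j using Fin.cases with
    | zero => simpa using le_trans hcv (h9 i)
    | succ j => simpa using h5 j i
  · intro j
    induction j using Fin.cases with
    | zero => simpa using hc4
    | succ j => simpa using h6 j
  · intro j j' e e'
    induction j using Fin.cases with
    | zero => exact absurd (by simpa using e) hc5
    | succ j =>
      induction j' using Fin.cases with
      | zero => exact absurd (by simpa using e') hc5
      | succ j' =>
        have := h7 j j' (by simpa using e) (by simpa using e')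
        rw [this]
  · intro j
    induction j using Fin.cases with
    | zero => simp
    | succ j => simpa using h8 j

lemma tail_mem23 {a b : ℕ} {T : TabT a (b + 1)} (hT : T ∈ Pc a (b + 1) (2, 3) 2)
    (h0 : T.1 0 = (2, 3)) : ((Fin.tail T.1, T.2) : TabT a b) ∈ Pc a b (2, 4) 2 := by
  have h7 := hT.2.2.2.2.2.2.1
  obtain ⟨g1, g2, g3, g4, g5, g6, g7, g8, g9⟩ := tail_mem hT
  refine ⟨g1, g2, g3, g4, g5, g6, g7, fun j => ?_, g9⟩
  have hne : (Fin.tail T.1 j) ≠ (2, 3) := by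
    intro he
    exact Fin.succ_ne_zero j (h7 j.succ 0 he h0)
  have hne' := (pair_ne_iff _ _ _).mp hne
  have hb := g1 j
  have hb8 := g8 j
  dsimp only at hb hb8 ⊢
  omega

lemma cons_mem23 {a b : ℕ} {T : TabT a b} (hT : T ∈ Pc a b (2, 4) 2) :
    ((Fin.cons (2, 3) T.1, T.2) : TabT a (b + 1)) ∈ Pc a (b + 1) (2, 3) 2 := by
  obtain ⟨h1, h2, h3, h4, h5, h6, h7, h8, h9⟩ := hT
  refine ⟨?_, h2, ?_, h4, ?_, ?_, ?_, ?_, h9⟩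
  · intro j
    induction j using Fin.cases with
    | zero => simp
    | succ j => simpa using h1 j
  · intro j j' hj
    induction j using Fin.cases with
    | zero =>
      induction j' using Fin.cases with
      | zero => simp
      | succ j' => have := h8 j'; simp only [Fin.cons_zero, Fin.cons_succ]; omega
    | succ j =>
      induction j' using Fin.cases with
      | zero =>
        exfalso
        have := Fin.le_def.mp hj
        simp at this
      | succ j' => simpa using h3 j j' (by rwa [Fin.succ_le_succ_iff] at hj)
  · intro j i
    induction j using Fin.cases with
    | zero => simpa using le_trans (le_refl 2) (h9 i)
    | succ j => simpa using h5 j i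
  · intro j
    induction j using Fin.cases with
    | zero => simp
    | succ j => simpa using h6 j
  · intro j j' e e'
    induction j using Fin.cases with
    | zero =>
      induction j' using Fin.cases with
      | zero => rfl
      | succ j' =>
        exfalso
        have e2 : T.1 j' = (2, 3) := by simpa using e'
        have h4le := (h8 j').2
        rw [e2] at h4le
        simp at h4le
    | succ j =>
      exfalso
      have e2 : T.1 j = (2, 3) := by simpa using e
      have h4le := (h8 j).2
      rw [e2] at h4le
      simp at h4le
  · intro j
    induction j using Fin.cases with
    | zero => simp
    | succ j => have := h8 j; simp only [Fin.cons_succ]; omega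

end C2pf

namespace C2pf

lemma gset12 (a b : ℕ) :
    {T ∈ Pc a (b + 1) (1, 2) 1 | ¬(T.1 0 = (1, 2))} = Pc a (b + 1) (1, 3) 1 := by
  ext T
  constructor
  · rintro ⟨⟨h1, h2, h3, h4, h5, h6, h7, h8, h9⟩, h0⟩
    refine ⟨h1, h2, h3, h4, h5, h6, h7, fun j => ?_, h9⟩
    have hm := h3 0 j (Fin.zero_le j)
    have hb := h1 0
    have hb8 := h8 0
    have h60 := h6 0
    have h0' := (pair_ne_iff _ _ _).mp h0
    have h60' := (pair_ne_iff _ _ _).mp h60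
    dsimp only at *
    omega
  · rintro ⟨h1, h2, h3, h4, h5, h6, h7, h8, h9⟩
    have hb8 := h8 0
    refine ⟨⟨h1, h2, h3, h4, h5, h6, h7, fun j => ?_, h9⟩, ?_⟩
    · have := h8 j; dsimp only at *; omega
    · rw [pair_ne_iff]; dsimp only at *; omega

lemma gset13 (a b : ℕ) :
    {T ∈ Pc a (b + 1) (1, 3) 1 | ¬(T.1 0 = (1, 3))} = Pc a (b + 1) (2, 3) 2 := by
  ext T
  constructor
  · rintro ⟨⟨h1, h2, h3, h4, h5, h6, h7, h8, h9⟩, h0⟩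
    have hfst : 2 ≤ (T.1 0).1 := by
      have hb := h1 0
      have hb8 := h8 0
      have h60 := h6 0
      have h0' := (pair_ne_iff _ _ _).mp h0
      have h60' := (pair_ne_iff _ _ _).mp h60
      dsimp only at *
      omega
    refine ⟨h1, h2, h3, h4, h5, h6, h7, fun j => ?_, fun i => le_trans hfst (h5 0 i)⟩
    have hm := h3 0 j (Fin.zero_le j)
    have := h8 j
    dsimp only at *
    omega
  · rintro ⟨h1, h2, h3, h4, h5, h6, h7, h8, h9⟩
    refine ⟨⟨h1, h2, h3, h4, h5, h6, h7, fun j => ?_,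
      fun i => le_trans (by norm_num) (h9 i)⟩, ?_⟩
    · have := h8 j; dsimp only at *; omega
    · have hb8 := h8 0; rw [pair_ne_iff]; dsimp only at *; omega

lemma gset23 (a b : ℕ) :
    {T ∈ Pc a (b + 1) (2, 3) 2 | ¬(T.1 0 = (2, 3))} = Pc a (b + 1) (2, 4) 2 := by
  ext T
  constructor
  · rintro ⟨⟨h1, h2, h3, h4, h5, h6, h7, h8, h9⟩, h0⟩
    have hsnd : 4 ≤ (T.1 0).2 := by
      have hb := h1 0
      have hb8 := h8 0
      have h0' := (pair_ne_iff _ _ _).mp h0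
      dsimp only at *
      omega
    refine ⟨h1, h2, h3, h4, h5, h6, h7, fun j => ?_, h9⟩
    have hm := h3 0 j (Fin.zero_le j)
    have := h8 j
    dsimp only at *
    omega
  · rintro ⟨h1, h2, h3, h4, h5, h6, h7, h8, h9⟩
    refine ⟨⟨h1, h2, h3, h4, h5, h6, h7, fun j => ?_, h9⟩, ?_⟩
    · have := h8 j; dsimp only at *; omega
    · have hb8 := h8 0; rw [pair_ne_iff]; dsimp only at *; omega

lemma gset24 (a b : ℕ) :
    {T ∈ Pc a (b + 1) (2, 4) 2 | ¬(T.1 0 = (2, 4))} = Pc a (b + 1) (3, 4) 3 := by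
  ext T
  constructor
  · rintro ⟨⟨h1, h2, h3, h4, h5, h6, h7, h8, h9⟩, h0⟩
    have hfst : 3 ≤ (T.1 0).1 := by
      have hb := h1 0
      have hb8 := h8 0
      have h0' := (pair_ne_iff _ _ _).mp h0
      dsimp only at *
      omega
    refine ⟨h1, h2, h3, h4, h5, h6, h7, fun j => ?_, fun i => le_trans hfst (h5 0 i)⟩
    have hm := h3 0 j (Fin.zero_le j)
    have := h8 j
    dsimp only at *
    omega
  · rintro ⟨h1, h2, h3, h4, h5, h6, h7, h8, h9⟩
    refine ⟨⟨h1, h2, h3, h4, h5, h6, h7, fun j => ?_,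
      fun i => le_trans (by norm_num) (h9 i)⟩, ?_⟩
    · have := h8 j; dsimp only at *; omega
    · have hb8 := h8 0; rw [pair_ne_iff]; dsimp only at *; omega

lemma gset34 (a b : ℕ) :
    {T ∈ Pc a (b + 1) (3, 4) 3 | ¬(T.1 0 = (3, 4))} = (∅ : Set (TabT a (b + 1))) := by
  ext T
  simp only [Set.mem_empty_iff_false, iff_false]
  rintro ⟨⟨h1, h2, h3, h4, h5, h6, h7, h8, h9⟩, h0⟩
  have hb := h1 0
  have hb8 := h8 0
  have h0' := (pair_ne_iff _ _ _).mp h0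
  dsimp only at *
  omega

def consColMap {a b : ℕ} (c : ℕ × ℕ) : TabT a b → TabT a (b + 1) :=
  fun S => (Fin.cons c S.1, S.2)

lemma consColMap_inj {a b : ℕ} (c : ℕ × ℕ) :
    Function.Injective (consColMap (a := a) (b := b) c) := by
  intro S S' h
  unfold consColMap at h
  rw [Prod.ext_iff] at h ⊢
  refine ⟨?_, h.2⟩
  funext j
  have := congrFun h.1 j.succ
  simpa using this

lemma eqset {a b : ℕ} {c : ℕ × ℕ} {v : ℕ} (hc1 : 1 ≤ c.1) (hc2 : c.1 < c.2) (hc3 : c.2 ≤ 4)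
    (hc4 : c ≠ (1, 4)) (hc5 : c ≠ (2, 3)) (hcv : c.1 ≤ v) :
    {T ∈ Pc a (b + 1) c v | T.1 0 = c} = consColMap c '' Pc a b c v := by
  ext T
  constructor
  · rintro ⟨hT, h0⟩
    refine ⟨(Fin.tail T.1, T.2), tail_mem hT, ?_⟩
    unfold consColMap
    dsimp only
    rw [← h0, Fin.cons_self_tail]
  · rintro ⟨S, hS, rfl⟩
    exact ⟨cons_mem hc1 hc2 hc3 hc4 hc5 hcv hS, by simp [consColMap]⟩

lemma eqset23 {a b : ℕ} :
    {T ∈ Pc a (b + 1) (2, 3) 2 | T.1 0 = (2, 3)} = consColMap (2, 3) '' Pc a b (2, 4) 2 := by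
  ext T
  constructor
  · rintro ⟨hT, h0⟩
    refine ⟨(Fin.tail T.1, T.2), tail_mem23 hT h0, ?_⟩
    unfold consColMap
    dsimp only
    rw [← h0, Fin.cons_self_tail]
  · rintro ⟨S, hS, rfl⟩
    exact ⟨cons_mem23 hS, by simp [consColMap]⟩

lemma tail_memRow {a : ℕ} {c : ℕ × ℕ} {v : ℕ} {T : TabT (a + 1) 0}
    (hT : T ∈ Pc (a + 1) 0 c v) : ((T.1, Fin.tail T.2) : TabT a 0) ∈ Pc a 0 c v := by
  obtain ⟨h1, h2, h3, h4, h5, h6, h7, h8, h9⟩ := hT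
  exact ⟨h1, fun i => h2 i.succ, h3,
    fun i i' h => h4 i.succ i'.succ (Fin.succ_le_succ_iff.mpr h),
    fun j i => h5 j i.succ, h6, h7, h8, fun i => h9 i.succ⟩

lemma cons_memRow {a : ℕ} {c : ℕ × ℕ} {v : ℕ} (hv1 : 1 ≤ v) (hv4 : v ≤ 4) {T : TabT a 0}
    (hT : T ∈ Pc a 0 c v) : ((T.1, Fin.cons v T.2) : TabT (a + 1) 0) ∈ Pc (a + 1) 0 c v := by
  obtain ⟨h1, h2, h3, h4, h5, h6, h7, h8, h9⟩ := hT
  refine ⟨h1, ?_, h3, ?_, fun j i => j.elim0, h6, h7, h8, ?_⟩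
  · intro i
    induction i using Fin.cases with
    | zero => simpa using ⟨hv1, hv4⟩
    | succ i => simpa using h2 i
  · intro i i' hi
    induction i using Fin.cases with
    | zero =>
      induction i' using Fin.cases with
      | zero => simp
      | succ i' => simpa using h9 i'
    | succ i =>
      induction i' using Fin.cases with
      | zero => exfalso; have := Fin.le_def.mp hi; simp at this
      | succ i' => simpa using h4 i i' (by rwa [Fin.succ_le_succ_iff] at hi)
  · intro i
    induction i using Fin.cases with
    | zero => simp
    | succ i => simpa using h9 i

def consRowMap {a : ℕ} (v : ℕ) : TabT a 0 → TabT (a + 1) 0 :=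
  fun S => (S.1, Fin.cons v S.2)

lemma consRowMap_inj {a : ℕ} (v : ℕ) :
    Function.Injective (consRowMap (a := a) v) := by
  intro S S' h
  unfold consRowMap at h
  rw [Prod.ext_iff] at h ⊢
  refine ⟨h.1, ?_⟩
  funext i
  have := congrFun h.2 i.succ
  simpa using this

lemma eqsetRow {a : ℕ} (c : ℕ × ℕ) (v : ℕ) (hv1 : 1 ≤ v) (hv4 : v ≤ 4) :
    {T ∈ Pc (a + 1) 0 c v | T.2 0 = v} = consRowMap v '' Pc a 0 c v := by
  ext T
  constructor
  · rintro ⟨hT, h0⟩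
    refine ⟨(T.1, Fin.tail T.2), tail_memRow hT, ?_⟩
    unfold consRowMap
    dsimp only
    rw [← h0, Fin.cons_self_tail]
  · rintro ⟨S, hS, rfl⟩
    exact ⟨cons_memRow hv1 hv4 hS, by simp [consRowMap]⟩

lemma gsetRow {a : ℕ} (c : ℕ × ℕ) (v : ℕ) :
    {T ∈ Pc (a + 1) 0 c v | ¬(T.2 0 = v)} = Pc (a + 1) 0 c (v + 1) := by
  ext T
  constructor
  · rintro ⟨⟨h1, h2, h3, h4, h5, h6, h7, h8, h9⟩, h0⟩
    refine ⟨h1, h2, h3, h4, h5, h6, h7, h8, fun i => ?_⟩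
    have := h4 0 i (Fin.zero_le i)
    have := h9 0
    omega
  · rintro ⟨h1, h2, h3, h4, h5, h6, h7, h8, h9⟩
    have h90 := h9 0
    exact ⟨⟨h1, h2, h3, h4, h5, h6, h7, h8, fun i => by have := h9 i; omega⟩, by omega⟩

lemma row5_empty (a : ℕ) (c : ℕ × ℕ) : Pc (a + 1) 0 c 5 = ∅ := by
  ext T
  simp only [Set.mem_empty_iff_false, iff_false]
  rintro ⟨h1, h2, h3, h4, h5, h6, h7, h8, h9⟩
  have := h2 0
  have := h9 0
  omega

lemma PS00 (c : ℕ × ℕ) (v : ℕ) : PS 0 0 c v = mm 0 0 := by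
  have hu : Pc 0 0 c v = {((fun j => j.elim0, fun i => i.elim0) : TabT 0 0)} := by
    ext T
    simp only [Set.mem_singleton_iff]
    constructor
    · intro _
      refine Prod.ext ?_ ?_ <;> funext j <;> exact j.elim0
    · rintro rfl
      exact ⟨fun j => j.elim0, fun i => i.elim0, fun j => j.elim0, fun i => i.elim0,
        fun j => j.elim0, fun j => j.elim0, fun j => j.elim0, fun j => j.elim0,
        fun i => i.elim0⟩
  rw [PS, hu, finsum_mem_singleton]
  unfold wtC nkOf
  norm_num

lemma peel_col_aux (a b : ℕ) (c : ℕ × ℕ) (v : ℕ) (cn : ℕ × ℕ) (vn : ℕ) (c' : ℕ × ℕ) (v' : ℕ)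
    (heq : {T ∈ Pc a (b + 1) c v | T.1 0 = c} = consColMap c '' Pc a b cn vn)
    (hne : {T ∈ Pc a (b + 1) c v | ¬(T.1 0 = c)} = Pc a (b + 1) c' v') :
    PS a (b + 1) c v =
      mm (wx c.1 + wx c.2) (wy c.1 + wy c.2) * PS a b cn vn + PS a (b + 1) c' v' := by
  rw [PS, finsum_split _ (Pc_finite a (b + 1) c v) (fun T => T.1 0 = c), heq, hne]
  congr 1
  rw [finsum_mem_image ((consColMap_inj c).injOn), PS,
    ← finsum_mul_const _ (Pc_finite a b cn vn)]
  apply finsum_mem_congr rfl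
  intro S _
  exact wtC_consCol c S

lemma peel_row_aux (a : ℕ) (c : ℕ × ℕ) (v : ℕ) (hv1 : 1 ≤ v) (hv4 : v ≤ 4) :
    PS (a + 1) 0 c v = mm (wx v) (wy v) * PS a 0 c v + PS (a + 1) 0 c (v + 1) := by
  rw [PS, finsum_split _ (Pc_finite (a + 1) 0 c v) (fun T => T.2 0 = v),
    eqsetRow c v hv1 hv4, gsetRow c v]
  congr 1
  rw [finsum_mem_image ((consRowMap_inj v).injOn), PS,
    ← finsum_mul_const _ (Pc_finite a 0 c v)]
  apply finsum_mem_congr rfl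
  intro S _
  exact wtC_consRow v S

end C2pf

namespace C2pf

noncomputable def DD : LP :=
  mm 1 1 - mm (-1) 2 - mm 3 (-1) + mm (-3) 2 + mm 3 (-2) - mm (-3) 1 - mm 1 (-2) +
    mm (-1) (-1)

noncomputable def XX : LP := mm 1 1 - mm (-1) 1
noncomputable def Fy : LP := mm 0 0 - mm 0 (-1)
noncomputable def Fb : LP := mm 0 0 - mm 2 (-2)

noncomputable def E3c (α : ℤ) : LP := XX * Fy * Fb * (mm α (-α) - mm (-α - 2) 1)

noncomputable def E2c (α : ℤ) : LP :=
  XX * (Fy * (mm (-α) α - mm (α + 2) (-α - 2)) - Fb * (mm (-α - 2) (α + 1) - mm (-α - 2) 0))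

noncomputable def F3c (α μ : ℤ) : LP :=
  mm (-2 * μ) μ *
    (E2c α + XX * Fy * ((mm 2 (-2) - mm (2 * μ + 2) (-2 * μ - 2)) * (mm α (-α) - mm (-α - 2) 1)))

noncomputable def Nc (α β : ℤ) : LP :=
  mm (α + 1) (β + 1) - mm (-(α + 1)) (α + β + 2) - mm (α + 2 * β + 3) (-(β + 1)) +
    mm (-(α + 2 * β + 3)) (α + β + 2) + mm (α + 2 * β + 3) (-(α + β + 2)) -
    mm (-(α + 2 * β + 3)) (β + 1) - mm (α + 1) (-(α + β + 2)) + mm (-(α + 1)) (-(β + 1))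

noncomputable def F1c (α β : ℤ) : LP := Nc α β - mm 0 1 * Nc α (β - 1)

lemma PS_empty5 (a : ℕ) (c : ℕ × ℕ) : PS (a + 1) 0 c 5 = 0 := by
  rw [PS, row5_empty]
  exact finsum_mem_empty

lemma chain_row4 (a : ℕ) (c : ℕ × ℕ) : PS a 0 c 4 = mm (-(a : ℤ)) 0 := by
  induction a with
  | zero => rw [PS00]; norm_num
  | succ n ih =>
    rw [peel_row_aux n c 4 (by norm_num) (by norm_num), ih, PS_empty5]
    simp only [wx, wy]
    norm_num [mm_mul]
    try (congr 1; push_cast; ring)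

lemma chain_row3 (a : ℕ) (c : ℕ × ℕ) : DD * PS a 0 c 3 = E3c (a : ℤ) := by
  induction a with
  | zero =>
    rw [PS00]
    unfold DD E3c XX Fy Fb
    push_cast
    simp only [mul_sub, sub_mul, mul_add, add_mul, mm_mul]
    ring_nf
  | succ n ih =>
    rw [peel_row_aux n c 3 (by norm_num) (by norm_num), chain_row4 (n + 1) c, mul_add,
      mul_left_comm DD (mm (wx 3) (wy 3)) _, ih]
    simp only [wx, wy]
    norm_num
    unfold DD E3c XX Fy Fb
    push_cast
    simp only [mul_sub, sub_mul, mul_add, add_mul, mm_mul]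
    ring_nf

lemma chain_row2 (a : ℕ) (c : ℕ × ℕ) : DD * PS a 0 c 2 = E2c (a : ℤ) := by
  induction a with
  | zero =>
    rw [PS00]
    unfold DD E2c XX Fy Fb
    push_cast
    simp only [mul_sub, sub_mul, mul_add, add_mul, mm_mul]
    ring_nf
  | succ n ih =>
    rw [peel_row_aux n c 2 (by norm_num) (by norm_num), mul_add,
      mul_left_comm DD (mm (wx 2) (wy 2)) _, ih, chain_row3 (n + 1) c]
    simp only [wx, wy]
    norm_num
    unfold E2c E3c XX Fy Fb
    push_cast
    simp only [mul_sub, sub_mul, mul_add, add_mul, mm_mul]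
    ring_nf

lemma chain_row1 (a : ℕ) (c : ℕ × ℕ) : DD * PS a 0 c 1 = Nc (a : ℤ) 0 := by
  induction a with
  | zero =>
    rw [PS00]
    unfold DD Nc
    push_cast
    simp only [mul_sub, sub_mul, mul_add, add_mul, mm_mul]
    ring_nf
  | succ n ih =>
    rw [peel_row_aux n c 1 (by norm_num) (by norm_num), mul_add,
      mul_left_comm DD (mm (wx 1) (wy 1)) _, ih, chain_row2 (n + 1) c]
    simp only [wx, wy]
    norm_num
    unfold Nc E2c XX Fy Fb
    push_cast
    simp only [mul_sub, sub_mul, mul_add, add_mul, mm_mul]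
    ring_nf

lemma peel_col34 (a b : ℕ) :
    PS a (b + 1) (3, 4) 3 = mm (wx 3 + wx 4) (wy 3 + wy 4) * PS a b (3, 4) 3 := by
  rw [PS, finsum_split _ (Pc_finite a (b + 1) (3, 4) 3) (fun T => T.1 0 = (3, 4)),
    eqset (c := (3, 4)) (by norm_num) (by norm_num) (by norm_num) (by decide) (by decide)
      (by norm_num),
    gset34, finsum_mem_empty, add_zero,
    finsum_mem_image ((consColMap_inj _).injOn), PS,
    ← finsum_mul_const _ (Pc_finite a b (3, 4) 3)]
  apply finsum_mem_congr rfl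
  intro S _
  exact wtC_consCol _ S

lemma chain_col34 (m a : ℕ) : DD * PS a m (3, 4) 3 = mm 0 (-(m : ℤ)) * E3c (a : ℤ) := by
  induction m with
  | zero =>
    rw [chain_row3 a (3, 4)]
    norm_num
    rw [show mm 0 0 = (1 : LP) from rfl, one_mul]
  | succ n ih =>
    rw [peel_col34 a n, mul_left_comm DD (mm (wx 3 + wx 4) (wy 3 + wy 4)) _, ih]
    simp only [wx, wy]
    norm_num
    push_cast
    simp only [← mul_assoc, mm_mul]
    norm_num

lemma chain_col24 (m a : ℕ) : DD * PS a m (2, 4) 2 = F3c (a : ℤ) (m : ℤ) := by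
  induction m with
  | zero =>
    rw [chain_row2 a (2, 4)]
    unfold F3c E2c XX Fy Fb
    push_cast
    simp only [mul_sub, sub_mul, mul_add, add_mul, mm_mul]
    ring_nf
  | succ n ih =>
    rw [peel_col_aux a n (2, 4) 2 (2, 4) 2 (3, 4) 3
        (eqset (by norm_num) (by norm_num) (by norm_num) (by decide) (by decide) (by norm_num))
        (gset24 a n),
      mul_add, mul_left_comm DD (mm (wx (2, 4).1 + wx (2, 4).2) (wy (2, 4).1 + wy (2, 4).2)) _,
      ih, chain_col34 (n + 1) a]
    simp only [wx, wy]
    norm_num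
    unfold F3c E2c E3c XX Fy Fb
    push_cast
    simp only [mul_sub, sub_mul, mul_add, add_mul, mm_mul]
    ring_nf

lemma chain_col13 (b a : ℕ) : DD * PS a b (1, 3) 1 = F1c (a : ℤ) (b : ℤ) := by
  induction b with
  | zero =>
    rw [chain_row1 a (1, 3)]
    unfold F1c Nc
    push_cast
    simp only [mul_sub, sub_mul, mul_add, add_mul, mm_mul]
    ring_nf
  | succ n ih =>
    have h23 : PS a (n + 1) (2, 3) 2 =
        mm (wx (2, 3).1 + wx (2, 3).2) (wy (2, 3).1 + wy (2, 3).2) * PS a n (2, 4) 2 +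
          PS a (n + 1) (2, 4) 2 :=
      peel_col_aux a n (2, 3) 2 (2, 4) 2 (2, 4) 2 eqset23 (gset23 a n)
    rw [peel_col_aux a n (1, 3) 1 (1, 3) 1 (2, 3) 2
        (eqset (by norm_num) (by norm_num) (by norm_num) (by decide) (by decide) (by norm_num))
        (gset13 a n),
      h23, mul_add, mul_add,
      mul_left_comm DD (mm (wx (1, 3).1 + wx (1, 3).2) (wy (1, 3).1 + wy (1, 3).2)) _, ih,
      mul_left_comm DD (mm (wx (2, 3).1 + wx (2, 3).2) (wy (2, 3).1 + wy (2, 3).2)) _,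
      chain_col24 n a, chain_col24 (n + 1) a]
    simp only [wx, wy]
    norm_num
    unfold F1c Nc F3c E2c XX Fy Fb
    push_cast
    simp only [mul_sub, sub_mul, mul_add, add_mul, mm_mul]
    ring_nf

lemma main_chain (b a : ℕ) : DD * PS a b (1, 2) 1 = Nc (a : ℤ) (b : ℤ) := by
  induction b with
  | zero =>
    rw [chain_row1 a (1, 2)]
    norm_num
  | succ n ih =>
    rw [peel_col_aux a n (1, 2) 1 (1, 2) 1 (1, 3) 1
        (eqset (by norm_num) (by norm_num) (by norm_num) (by decide) (by decide) (by norm_num))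
        (gset12 a n),
      mul_add, mul_left_comm DD (mm (wx (1, 2).1 + wx (1, 2).2) (wy (1, 2).1 + wy (1, 2).2)) _,
      ih, chain_col13 (n + 1) a]
    simp only [wx, wy]
    norm_num
    unfold F1c Nc
    push_cast
    simp only [mul_sub, sub_mul, mul_add, add_mul, mm_mul]
    ring_nf

end C2pf

namespace C2pf

lemma SC2_eq (a b : ℕ) : SC2 a b = Pc a b (1, 2) 1 := by
  ext T
  constructor
  · rintro ⟨h1, h2, h3, h4, h5, h6, h7⟩
    refine ⟨h1, h2, h3, h4, h5, h6, h7, fun j => ?_, fun i => (h2 i).1⟩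
    have := h1 j
    dsimp only at *
    omega
  · rintro ⟨h1, h2, h3, h4, h5, h6, h7, h8, h9⟩
    exact ⟨h1, h2, h3, h4, h5, h6, h7⟩

end C2pf


/-- Weyl's character formula for `C2`: the Weyl denominator times the weight
generating function of `S_C2(a,b)` equals the alternating Weyl numerator for
highest weight `a ω_α + b ω_β`. -/
theorem C2_character (a b : ℕ) :
    (mm 1 1 - mm (-1) 2 - mm 3 (-1) + mm (-3) 2 + mm 3 (-2) - mm (-3) 1 -
          mm 1 (-2) + mm (-1) (-1)) *
        (∑ᶠ T ∈ SC2 a b,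
          mm ((nkOf T 1 : ℤ) - (nkOf T 2 : ℤ) + (nkOf T 3 : ℤ) - (nkOf T 4 : ℤ))
            ((nkOf T 2 : ℤ) - (nkOf T 3 : ℤ))) =
      mm ((a : ℤ) + 1) ((b : ℤ) + 1) - mm (-((a : ℤ) + 1)) ((a : ℤ) + (b : ℤ) + 2) -
        mm ((a : ℤ) + 2 * (b : ℤ) + 3) (-((b : ℤ) + 1)) +
        mm (-((a : ℤ) + 2 * (b : ℤ) + 3)) ((a : ℤ) + (b : ℤ) + 2) +
        mm ((a : ℤ) + 2 * (b : ℤ) + 3) (-((a : ℤ) + (b : ℤ) + 2)) -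
        mm (-((a : ℤ) + 2 * (b : ℤ) + 3)) ((b : ℤ) + 1) -
        mm ((a : ℤ) + 1) (-((a : ℤ) + (b : ℤ) + 2)) +
        mm (-((a : ℤ) + 1)) (-((b : ℤ) + 1)) := by
  have h := C2pf.main_chain b a
  rw [C2pf.PS, ← C2pf.SC2_eq] at h
  unfold C2pf.DD C2pf.Nc at h
  simp only [C2pf.wtC] at h
  exact h
end

section
/- For all integers a, b ≥ 0, the following identity holds in the polynomial ring ℤ[q]: (Σ_{T ∈ S_A2(a,b)} q^{r(T)}) · (1 − q)(1 − q)(1 − q²) = (1 − q^{a+1})(1 − q^{b+1})(1 − q^{a+b+2}), where r(T) = Σ_{j=1}^{b} ((2 − T^(j)_1) + (3 − T^(j)_2)) + Σ_{j=b+1}^{a+b} (3 − T^(j)_1). -/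
/-- The rank statistic on `A2`-semistandard tableaux. -/
def rA2 {a b : ℕ} (T : TabT a b) : ℕ :=
  (∑ j : Fin b, ((2 - (T.1 j).1) + (3 - (T.1 j).2))) + ∑ i : Fin a, (3 - T.2 i)

/-- The rank statistic on `C2`-semistandard tableaux. -/
def rC2 {a b : ℕ} (T : TabT a b) : ℕ :=
  (∑ j : Fin b, ((3 - (T.1 j).1) + (4 - (T.1 j).2))) + ∑ i : Fin a, (4 - T.2 i)

/-- The rank contribution `c` of a length-two column of a `G2`-semistandard tableau. -/
def cG2col : ℕ × ℕ → ℕ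
  | (1, 2) => 10
  | (1, 3) => 9
  | (1, 4) => 8
  | (1, 5) => 7
  | (1, 6) => 6
  | (1, 7) => 5
  | (2, 5) => 6
  | (2, 6) => 5
  | (2, 7) => 4
  | (3, 6) => 4
  | (3, 7) => 3
  | (4, 7) => 2
  | (5, 7) => 1
  | (6, 7) => 0
  | _ => 0

/-- The rank statistic on `G2`-semistandard tableaux. -/
def rG2 {a b : ℕ} (T : TabT a b) : ℕ :=
  (∑ j : Fin b, cG2col (T.1 j)) + ∑ i : Fin a, (7 - T.2 i)

open Finset Polynomial

noncomputable def Sg (n : ℕ) : Polynomial ℤ := ∑ k ∈ Finset.range n, X ^ k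
noncomputable def Ag (n : ℕ) : Polynomial ℤ := ∑ p ∈ Finset.range (n+1), X ^ (2*p) * Sg (n+1-p)
noncomputable def Bg (n : ℕ) : Polynomial ℤ := ∑ w ∈ Finset.range n, X ^ w * Sg (w+1)

lemma Sg_mul (n : ℕ) : Sg n * (1 - X) = 1 - X ^ n := by
  have h : Sg n * (X - 1) = X ^ n - 1 := geom_sum_mul (X : Polynomial ℤ) n
  linear_combination -h

lemma Sg_succ (n : ℕ) : Sg (n+1) = Sg n + X ^ n := Finset.sum_range_succ _ n

lemma Ag_succ (n : ℕ) : Ag (n+1) = Ag n + X ^ (n+1) * Sg (n+2) := by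
  rw [Ag, Finset.sum_range_succ]
  have h1 : ∀ p ∈ Finset.range (n+1), X ^ (2*p) * Sg (n+1+1-p) =
      X ^ (2*p) * Sg (n+1-p) + X^(n+1) * X ^ p := by
    intro p hp
    rw [Finset.mem_range] at hp
    have e1 : n + 1 + 1 - p = (n + 1 - p) + 1 := by omega
    rw [e1, Sg_succ, mul_add]
    congr 1
    rw [← pow_add, ← pow_add]
    congr 1
    omega
  rw [Finset.sum_congr rfl h1, Finset.sum_add_distrib, ← Finset.mul_sum]
  have e2 : n + 1 + 1 - (n+1) = 1 := by omega
  rw [e2]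
  have e3 : Sg 1 = 1 := by simp [Sg]
  have e4 : Sg (n+2) = Sg (n+1) + X^(n+1) := Sg_succ (n+1)
  rw [e3, e4, Ag,
    show (∑ p ∈ Finset.range (n+1), (X:Polynomial ℤ)^p) = Sg (n+1) from rfl]
  ring

lemma Ag_mul (n : ℕ) : Ag n * ((1 - X) * (1 - X ^ 2)) = (1 - X ^ (n+1)) * (1 - X ^ (n+2)) := by
  induction n with
  | zero =>
    have h0 : Ag 0 = 1 := by simp [Ag, Sg]
    rw [h0]; ring
  | succ n ih =>
    rw [Ag_succ, add_mul, ih]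
    have hs : Sg (n+2) * (1 - X) = 1 - X ^ (n+2) := Sg_mul _
    linear_combination (X ^ (n+1) * (1 - X^2)) * hs

lemma Bg_mul (n : ℕ) : Bg n * ((1 - X) * (1 - X ^ 2)) = (1 - X ^ n) * (1 - X ^ (n+1)) := by
  induction n with
  | zero => simp [Bg]
  | succ n ih =>
    rw [Bg, Finset.sum_range_succ, ← Bg, add_mul, ih]
    have hs : Sg (n+1) * (1 - X) = 1 - X ^ (n+1) := Sg_mul _
    linear_combination (X ^ n * (1 - X^2)) * hs

lemma final_alg (a b : ℕ) :
    (X ^ b * Sg (b+1) * Ag a + Bg b * Sg (a+1)) * ((1-X) * (1-X) * (1-X^2)) =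
    (1 - X ^ (a + 1)) * (1 - (X:Polynomial ℤ) ^ (b + 1)) * (1 - X ^ (a + b + 2)) := by
  have h1 : X ^ b * Sg (b+1) * Ag a * ((1-X) * ((1-X) * (1-X^2))) =
      X ^ b * (1 - X^(b+1)) * ((1-X^(a+1)) * (1-X^(a+2))) := by
    linear_combination (X^b * Ag a * ((1-X)*(1-X^2))) * Sg_mul (b+1) +
      (X^b * (1-X^(b+1))) * Ag_mul a
  have h2 : Bg b * Sg (a+1) * ((1-X) * ((1-X) * (1-X^2))) =
      (1 - X^b) * (1 - X^(b+1)) * (1 - X^(a+1)) := by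
    linear_combination (Bg b * ((1-X)*(1-X^2))) * Sg_mul (a+1) + (1 - X^(a+1)) * Bg_mul b
  have expand : (X ^ b * Sg (b+1) * Ag a + Bg b * Sg (a+1)) * ((1-X) * (1-X) * (1-X^2)) =
      X ^ b * Sg (b+1) * Ag a * ((1-X) * ((1-X) * (1-X^2))) +
      Bg b * Sg (a+1) * ((1-X) * ((1-X) * (1-X^2))) := by ring
  rw [expand, h1, h2]
  ring

/-- The model tableau with parameters `z x p r`. -/
def mkT (a b z x p r : ℕ) : TabT a b :=
  (fun j => if (j : ℕ) < x then (1,2) else if (j:ℕ) < b - z then (1,3) else (2,3),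
   fun i => if (i : ℕ) < p then 1 else if (i:ℕ) < p + r then 2 else 3)

/-- The parameter set; tuples `(z, x, p, r)`. -/
def Pset (a b : ℕ) : Finset (ℕ × ℕ × ℕ × ℕ) :=
  (Finset.range (b+1) ×ˢ Finset.range (b+1) ×ˢ Finset.range (a+1) ×ˢ Finset.range (a+1)).filter
    (fun t => t.2.1 + t.1 ≤ b ∧ t.2.2.1 + t.2.2.2 ≤ a ∧ (0 < t.1 → t.2.2.1 = 0))

lemma mkT_mem {a b z x p r : ℕ} (hxz : x + z ≤ b) (hpr : p + r ≤ a) (hzp : 0 < z → p = 0) :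
    mkT a b z x p r ∈ SA2 a b := by
  refine ⟨?_, ?_, ?_, ?_, ?_⟩
  · intro j; simp only [mkT]; split_ifs <;> simp
  · intro i; simp only [mkT]; split_ifs <;> omega
  · intro j j' hjj'
    have h : (j:ℕ) ≤ (j':ℕ) := hjj'
    simp only [mkT]
    constructor <;> (split_ifs <;> simp <;> omega)
  · intro i i' hii'
    have h : (i:ℕ) ≤ (i':ℕ) := hii'
    simp only [mkT]
    split_ifs <;> omega
  · intro j i
    have hj := j.isLt
    have hi := i.isLt
    simp only [mkT]
    rcases Nat.eq_zero_or_pos z with hz | hz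
    · subst hz
      split_ifs <;> simp <;> omega
    · have hp0 : p = 0 := hzp hz
      subst hp0
      split_ifs <;> simp <;> omega

lemma lower_iff {n : ℕ} (s : Finset (Fin n)) (h : ∀ j j' : Fin n, j ≤ j' → j' ∈ s → j ∈ s)
    (j : Fin n) : j ∈ s ↔ (j:ℕ) < s.card := by
  constructor
  · intro hj
    have hsub : Finset.Iic j ⊆ s := fun j' hj' => h j' j (Finset.mem_Iic.mp hj') hj
    have hc := Finset.card_le_card hsub
    rw [Fin.card_Iic] at hc
    omega
  · intro hj
    by_contra hjs
    have hsub : s ⊆ Finset.Iio j := by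
      intro j' hj'
      rw [Finset.mem_Iio]
      by_contra hle
      exact hjs (h j j' (le_of_not_gt hle) hj')
    have hc := Finset.card_le_card hsub
    rw [Fin.card_Iio] at hc
    omega

lemma mkT_inj_aux {a b z x p r z' x' p' r' : ℕ}
    (h1 : x + z ≤ b) (h2 : p + r ≤ a) (h1' : x' + z' ≤ b) (h2' : p' + r' ≤ a)
    (heq : mkT a b z x p r = mkT a b z' x' p' r') :
    z = z' ∧ x = x' ∧ p = p' ∧ r = r' := by
  have hc : ∀ k : ℕ, k < b →
      ((if k < x then ((1,2):ℕ×ℕ) else if k < b - z then (1,3) else (2,3)) =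
       (if k < x' then (1,2) else if k < b - z' then (1,3) else (2,3))) :=
    fun k hk => congrFun (congrArg Prod.fst heq) ⟨k, hk⟩
  have he : ∀ k : ℕ, k < a →
      ((if k < p then (1:ℕ) else if k < p + r then 2 else 3) =
       (if k < p' then 1 else if k < p' + r' then 2 else 3)) :=
    fun k hk => congrFun (congrArg Prod.snd heq) ⟨k, hk⟩
  have cx1 : ¬ x < x' := by
    intro hlt
    have hthis := hc x (by omega)
    split_ifs at hthis <;> first | omega | (simp only [Prod.mk.injEq] at hthis; omega)
  have cx2 : ¬ x' < x := by
    intro hlt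
    have hthis := hc x' (by omega)
    split_ifs at hthis <;> first | omega | (simp only [Prod.mk.injEq] at hthis; omega)
  have cz1 : ¬ z < z' := by
    intro hlt
    have hthis := hc (b - z') (by omega)
    split_ifs at hthis <;> first | omega | (simp only [Prod.mk.injEq] at hthis; omega)
  have cz2 : ¬ z' < z := by
    intro hlt
    have hthis := hc (b - z) (by omega)
    split_ifs at hthis <;> first | omega | (simp only [Prod.mk.injEq] at hthis; omega)
  have cp1 : ¬ p < p' := by
    intro hlt
    have hthis := he p (by omega)
    split_ifs at hthis <;> omega
  have cp2 : ¬ p' < p := by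
    intro hlt
    have hthis := he p' (by omega)
    split_ifs at hthis <;> omega
  have hpp : p = p' := by omega
  subst hpp
  have cr1 : ¬ r < r' := by
    intro hlt
    have hthis := he (p + r) (by omega)
    split_ifs at hthis <;> omega
  have cr2 : ¬ r' < r := by
    intro hlt
    have hthis := he (p + r') (by omega)
    split_ifs at hthis <;> omega
  exact ⟨by omega, by omega, rfl, by omega⟩

lemma mem_Pset_iff {a b : ℕ} {t : ℕ × ℕ × ℕ × ℕ} :
    t ∈ Pset a b ↔ t.2.1 + t.1 ≤ b ∧ t.2.2.1 + t.2.2.2 ≤ a ∧ (0 < t.1 → t.2.2.1 = 0) := by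
  obtain ⟨z, x, p, r⟩ := t
  simp only [Pset, Finset.mem_filter, Finset.mem_product, Finset.mem_range]
  constructor
  · rintro ⟨_, h⟩; exact h
  · rintro ⟨u1, u2, u3⟩
    exact ⟨⟨by omega, by omega, by omega, by omega⟩, u1, u2, u3⟩

lemma exists_param {a b : ℕ} {T : TabT a b} (hT : T ∈ SA2 a b) :
    ∃ t ∈ Pset a b, mkT a b t.1 t.2.1 t.2.2.1 t.2.2.2 = T := by
  obtain ⟨hcol, hrow, hcc, hrr, hcr⟩ := hT
  set s1 := Finset.univ.filter (fun j : Fin b => T.1 j = (1,2)) with hs1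
  set s2 := Finset.univ.filter (fun j : Fin b => (T.1 j).1 = 1) with hs2
  set u1 := Finset.univ.filter (fun i : Fin a => T.2 i = 1) with hu1
  set u2 := Finset.univ.filter (fun i : Fin a => T.2 i ≤ 2) with hu2
  have l1 : ∀ j j' : Fin b, j ≤ j' → j' ∈ s1 → j ∈ s1 := by
    intro j j' hle hj'
    simp only [hs1, Finset.mem_filter, Finset.mem_univ, true_and] at hj' ⊢
    obtain ⟨ha1, ha2⟩ := hcc j j' hle
    obtain ⟨b1, b2, b3, b4, b5⟩ := hcol j
    have ha1' : (T.1 j).1 ≤ 1 := by rw [hj'] at ha1; exact ha1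
    have ha2' : (T.1 j).2 ≤ 2 := by rw [hj'] at ha2; exact ha2
    have e1 : (T.1 j).1 = 1 := by omega
    have e2 : (T.1 j).2 = 2 := by omega
    exact Prod.ext_iff.mpr ⟨e1, e2⟩
  have l2 : ∀ j j' : Fin b, j ≤ j' → j' ∈ s2 → j ∈ s2 := by
    intro j j' hle hj'
    simp only [hs2, Finset.mem_filter, Finset.mem_univ, true_and] at hj' ⊢
    obtain ⟨ha1, ha2⟩ := hcc j j' hle
    obtain ⟨b1, b2, b3, b4, b5⟩ := hcol j
    omega
  have l3 : ∀ i i' : Fin a, i ≤ i' → i' ∈ u1 → i ∈ u1 := by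
    intro i i' hle hi'
    simp only [hu1, Finset.mem_filter, Finset.mem_univ, true_and] at hi' ⊢
    have ha := hrr i i' hle
    obtain ⟨b1, b2⟩ := hrow i
    omega
  have l4 : ∀ i i' : Fin a, i ≤ i' → i' ∈ u2 → i ∈ u2 := by
    intro i i' hle hi'
    simp only [hu2, Finset.mem_filter, Finset.mem_univ, true_and] at hi' ⊢
    have ha := hrr i i' hle
    omega
  have m1 : ∀ j : Fin b, T.1 j = (1,2) ↔ (j:ℕ) < s1.card := by
    intro j
    rw [← lower_iff s1 l1 j, hs1]
    simp
  have m2 : ∀ j : Fin b, (T.1 j).1 = 1 ↔ (j:ℕ) < s2.card := by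
    intro j
    rw [← lower_iff s2 l2 j, hs2]
    simp
  have m3 : ∀ i : Fin a, T.2 i = 1 ↔ (i:ℕ) < u1.card := by
    intro i
    rw [← lower_iff u1 l3 i, hu1]
    simp
  have m4 : ∀ i : Fin a, T.2 i ≤ 2 ↔ (i:ℕ) < u2.card := by
    intro i
    rw [← lower_iff u2 l4 i, hu2]
    simp
  have hwb : s2.card ≤ b := by
    have h := Finset.card_filter_le (Finset.univ : Finset (Fin b)) (fun j => (T.1 j).1 = 1)
    simpa [hs2] using h
  have hab : u2.card ≤ a := by
    have h := Finset.card_filter_le (Finset.univ : Finset (Fin a)) (fun i => T.2 i ≤ 2)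
    simpa [hu2] using h
  have hxw : s1.card ≤ s2.card := by
    apply Finset.card_le_card
    intro j hj
    simp only [hs1, hs2, Finset.mem_filter, Finset.mem_univ, true_and] at hj ⊢
    rw [hj]
  have hpu : u1.card ≤ u2.card := by
    apply Finset.card_le_card
    intro i hi
    simp only [hu1, hu2, Finset.mem_filter, Finset.mem_univ, true_and] at hi ⊢
    omega
  have hp0 : s2.card < b → u1.card = 0 := by
    intro hw
    have hj0 : ¬ ((T.1 ⟨s2.card, hw⟩).1 = 1) := by simp [m2]
    obtain ⟨b1, b2, b3, b4, b5⟩ := hcol ⟨s2.card, hw⟩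
    rw [Finset.card_eq_zero, hu1, Finset.filter_eq_empty_iff]
    intro i _
    have hle := hcr ⟨s2.card, hw⟩ i
    omega
  refine ⟨(b - s2.card, s1.card, u1.card, u2.card - u1.card), ?_, ?_⟩
  · rw [mem_Pset_iff]
    dsimp only
    exact ⟨by omega, by omega, fun hz => hp0 (by omega)⟩
  · have hbw : b - (b - s2.card) = s2.card := by omega
    refine Prod.ext ?_ ?_
    · funext j
      show (if (j:ℕ) < s1.card then ((1:ℕ),(2:ℕ)) else
        if (j:ℕ) < b - (b - s2.card) then (1,3) else (2,3)) = T.1 j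
      rw [hbw]
      obtain ⟨b1, b2, b3, b4, b5⟩ := hcol j
      by_cases h1 : (j:ℕ) < s1.card
      · rw [if_pos h1]
        exact ((m1 j).mpr h1).symm
      · rw [if_neg h1]
        have hne : ¬ ((T.1 j).1 = 1 ∧ (T.1 j).2 = 2) := by
          intro hh
          exact h1 ((m1 j).mp (Prod.ext_iff.mpr ⟨hh.1, hh.2⟩))
        by_cases h2 : (j:ℕ) < s2.card
        · rw [if_pos h2]
          have ht : (T.1 j).1 = 1 := (m2 j).mpr h2
          have hres : T.1 j = ((1:ℕ), (3:ℕ)) := Prod.ext_iff.mpr ⟨ht, by omega⟩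
          exact hres.symm
        · rw [if_neg h2]
          have ht : ¬ (T.1 j).1 = 1 := fun hh => h2 ((m2 j).mp hh)
          have hres : T.1 j = ((2:ℕ), (3:ℕ)) := Prod.ext_iff.mpr ⟨by omega, by omega⟩
          exact hres.symm
    · funext i
      show (if (i:ℕ) < u1.card then (1:ℕ) else
        if (i:ℕ) < u1.card + (u2.card - u1.card) then 2 else 3) = T.2 i
      have hcc2 : u1.card + (u2.card - u1.card) = u2.card := by omega
      rw [hcc2]
      obtain ⟨b1, b2⟩ := hrow i
      by_cases h1 : (i:ℕ) < u1.card
      · rw [if_pos h1]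
        exact ((m3 i).mpr h1).symm
      · rw [if_neg h1]
        have hne : ¬ T.2 i = 1 := fun hh => h1 ((m3 i).mp hh)
        by_cases h2 : (i:ℕ) < u2.card
        · rw [if_pos h2]
          have ht := (m4 i).mpr h2
          omega
        · rw [if_neg h2]
          have ht : ¬ T.2 i ≤ 2 := fun hh => h2 ((m4 i).mp hh)
          omega

lemma SA2_eq (a b : ℕ) :
    SA2 a b = ↑((Pset a b).image (fun t => mkT a b t.1 t.2.1 t.2.2.1 t.2.2.2)) := by
  ext T
  simp only [Finset.coe_image, Set.mem_image, Finset.mem_coe]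
  constructor
  · intro hT
    obtain ⟨t, ht, he⟩ := exists_param hT
    exact ⟨t, ht, he⟩
  · rintro ⟨t, ht, rfl⟩
    rw [mem_Pset_iff] at ht
    exact mkT_mem (by omega) (by omega) ht.2.2

lemma rA2_mkT {a b z x p r : ℕ} (hxz : x + z ≤ b) (hpr : p + r ≤ a) :
    rA2 (mkT a b z x p r) = (b - z + x) + (2*p + r) := by
  have hind : ∀ m n : ℕ, m ≤ n → ∑ k ∈ Finset.range n, (if k < m then (1:ℕ) else 0) = m := by
    intro m n hmn
    have hfil : (Finset.range n).filter (fun k => k < m) = Finset.range m := by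
      ext k
      simp only [Finset.mem_filter, Finset.mem_range]
      omega
    rw [← Finset.sum_filter, hfil]
    simp
  unfold rA2 mkT
  dsimp only
  rw [Fin.sum_univ_eq_sum_range (fun k => ((2:ℕ) -
      (if k < x then ((1:ℕ),(2:ℕ)) else if k < b - z then (1,3) else (2,3)).1) +
      ((3:ℕ) - (if k < x then ((1:ℕ),(2:ℕ)) else if k < b - z then (1,3) else (2,3)).2)) b]
  rw [Fin.sum_univ_eq_sum_range (fun k => (3:ℕ) -
      (if k < p then (1:ℕ) else if k < p + r then 2 else 3)) a]
  have e1 : ∑ k ∈ Finset.range b, (((2:ℕ) -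
      (if k < x then ((1:ℕ),(2:ℕ)) else if k < b - z then (1,3) else (2,3)).1) +
      ((3:ℕ) - (if k < x then ((1:ℕ),(2:ℕ)) else if k < b - z then (1,3) else (2,3)).2)) =
      ∑ k ∈ Finset.range b, ((if k < x then (1:ℕ) else 0) + (if k < b - z then 1 else 0)) := by
    refine Finset.sum_congr rfl fun k hk => ?_
    rw [Finset.mem_range] at hk
    split_ifs <;> simp <;> omega
  have e2 : ∑ k ∈ Finset.range a, ((3:ℕ) -
      (if k < p then (1:ℕ) else if k < p + r then 2 else 3)) =
      ∑ k ∈ Finset.range a, ((if k < p then (1:ℕ) else 0) + (if k < p + r then 1 else 0)) := by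
    refine Finset.sum_congr rfl fun k hk => ?_
    rw [Finset.mem_range] at hk
    split_ifs <;> omega
  rw [e1, e2, Finset.sum_add_distrib, Finset.sum_add_distrib,
    hind x b (by omega), hind (b-z) b (by omega), hind p a (by omega), hind (p+r) a (by omega)]
  omega

lemma sum_Pset (a b : ℕ) :
    ∑ t ∈ Pset a b, (X:Polynomial ℤ) ^ ((b - t.1 + t.2.1) + (2*t.2.2.1 + t.2.2.2)) =
    X ^ b * Sg (b+1) * Ag a + Bg b * Sg (a+1) := by
  have hz0 : (∑ x ∈ Finset.range (b+1), ∑ p ∈ Finset.range (a+1), ∑ r ∈ Finset.range (a+1),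
      if x + 0 ≤ b ∧ p + r ≤ a ∧ (0 < 0 → p = 0)
      then (X:Polynomial ℤ) ^ ((b - 0 + x) + (2*p + r)) else 0) =
      X ^ b * Sg (b+1) * Ag a := by
    simp only [Nat.add_zero, Nat.sub_zero, lt_self_iff_false, false_implies, and_true]
    calc (∑ x ∈ Finset.range (b+1), ∑ p ∈ Finset.range (a+1), ∑ r ∈ Finset.range (a+1),
        if x ≤ b ∧ p + r ≤ a then (X:Polynomial ℤ) ^ ((b + x) + (2*p + r)) else 0)
        = ∑ x ∈ Finset.range (b+1), X^(b+x) * Ag a := by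
          refine Finset.sum_congr rfl fun x hx => ?_
          rw [Finset.mem_range] at hx
          have hxb : x ≤ b := by omega
          simp only [hxb, true_and]
          rw [Ag, Finset.mul_sum]
          refine Finset.sum_congr rfl fun p hp => ?_
          rw [Finset.mem_range] at hp
          have hfil : (Finset.range (a+1)).filter (fun r => p + r ≤ a)
              = Finset.range (a+1-p) := by
            ext k
            simp only [Finset.mem_filter, Finset.mem_range]
            omega
          rw [← Finset.sum_filter, hfil, Sg, Finset.mul_sum, Finset.mul_sum]
          refine Finset.sum_congr rfl fun k hk => ?_
          ring
      _ = X ^ b * Sg (b+1) * Ag a := by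
          rw [← Finset.sum_mul]
          congr 1
          rw [Sg, Finset.mul_sum]
          exact Finset.sum_congr rfl fun k _ => pow_add X b k
  have hz1 : (∑ z' ∈ Finset.range b, ∑ x ∈ Finset.range (b+1), ∑ p ∈ Finset.range (a+1),
      ∑ r ∈ Finset.range (a+1),
      if x + (z'+1) ≤ b ∧ p + r ≤ a ∧ (0 < z'+1 → p = 0)
      then (X:Polynomial ℤ) ^ ((b - (z'+1) + x) + (2*p + r)) else 0) =
      Bg b * Sg (a+1) := by
    calc (∑ z' ∈ Finset.range b, ∑ x ∈ Finset.range (b+1), ∑ p ∈ Finset.range (a+1),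
        ∑ r ∈ Finset.range (a+1),
        if x + (z'+1) ≤ b ∧ p + r ≤ a ∧ (0 < z'+1 → p = 0)
        then (X:Polynomial ℤ) ^ ((b - (z'+1) + x) + (2*p + r)) else 0)
        = ∑ z' ∈ Finset.range b,
            X ^ (b-(z'+1)) * Sg ((b-(z'+1))+1) * Sg (a+1) := by
          refine Finset.sum_congr rfl fun z' hz' => ?_
          rw [Finset.mem_range] at hz'
          calc (∑ x ∈ Finset.range (b+1), ∑ p ∈ Finset.range (a+1), ∑ r ∈ Finset.range (a+1),
              if x + (z'+1) ≤ b ∧ p + r ≤ a ∧ (0 < z'+1 → p = 0)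
              then (X:Polynomial ℤ) ^ ((b - (z'+1) + x) + (2*p + r)) else 0)
              = ∑ x ∈ Finset.range (b+1), if x + (z'+1) ≤ b then
                  (∑ r ∈ Finset.range (a+1), (X:Polynomial ℤ) ^ ((b - (z'+1) + x) + r))
                  else 0 := by
                refine Finset.sum_congr rfl fun x hx => ?_
                rw [Finset.sum_eq_single_of_mem 0 (by simp)]
                · by_cases hcond : x + (z'+1) ≤ b
                  · rw [if_pos hcond]
                    refine Finset.sum_congr rfl fun rr hr => ?_
                    rw [Finset.mem_range] at hr
                    rw [if_pos ⟨hcond, by omega, fun _ => rfl⟩]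
                    norm_num
                  · rw [if_neg hcond]
                    refine Finset.sum_eq_zero fun rr hr => ?_
                    exact if_neg (by omega)
                · intro pp _ hpp
                  refine Finset.sum_eq_zero fun rr hr => ?_
                  exact if_neg (by omega)
            _ = X ^ (b-(z'+1)) * Sg ((b-(z'+1))+1) * Sg (a+1) := by
                have hfil : (Finset.range (b+1)).filter (fun x => x + (z'+1) ≤ b)
                    = Finset.range ((b-(z'+1))+1) := by
                  ext k
                  simp only [Finset.mem_filter, Finset.mem_range]
                  omega
                rw [← Finset.sum_filter, hfil]
                calc (∑ x ∈ Finset.range ((b-(z'+1))+1),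
                    ∑ r ∈ Finset.range (a+1), (X:Polynomial ℤ) ^ ((b - (z'+1) + x) + r))
                    = (∑ x ∈ Finset.range ((b-(z'+1))+1), (X:Polynomial ℤ) ^ (b-(z'+1)+x)) *
                      (∑ r ∈ Finset.range (a+1), (X:Polynomial ℤ) ^ r) := by
                      rw [Finset.sum_mul_sum]
                      refine Finset.sum_congr rfl fun x _ => ?_
                      refine Finset.sum_congr rfl fun r _ => ?_
                      rw [pow_add]
                  _ = X ^ (b-(z'+1)) * Sg ((b-(z'+1))+1) * Sg (a+1) := by
                      have hxsum : (∑ x ∈ Finset.range ((b-(z'+1))+1),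
                          (X:Polynomial ℤ)^((b-(z'+1))+x))
                          = X^(b-(z'+1)) * Sg ((b-(z'+1))+1) := by
                        rw [Sg, Finset.mul_sum]
                        exact Finset.sum_congr rfl fun k _ => pow_add X _ k
                      rw [hxsum,
                        show (∑ r ∈ Finset.range (a+1), (X:Polynomial ℤ)^r) = Sg (a+1) from rfl]
      _ = ∑ z' ∈ Finset.range b, X ^ (b-1-z') * Sg ((b-1-z')+1) * Sg (a+1) := by
          refine Finset.sum_congr rfl fun z' hz' => ?_
          rw [Finset.mem_range] at hz'
          rw [show b - (z'+1) = b - 1 - z' from by omega]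
      _ = Bg b * Sg (a+1) := by
          rw [← Finset.sum_mul]
          congr 1
          rw [Bg]
          exact Finset.sum_range_reflect (fun w => (X:Polynomial ℤ)^w * Sg (w+1)) b
  rw [Pset, Finset.sum_filter]
  simp only [Finset.sum_product]
  rw [Finset.sum_range_succ']
  rw [show X ^ b * Sg (b+1) * Ag a + Bg b * Sg (a+1)
    = Bg b * Sg (a+1) + X ^ b * Sg (b+1) * Ag a from by ring]
  exact congrArg₂ (· + ·) hz1 hz0

/-- The rank generating function of the lattice of `A2`-semistandard tableaux of
shape `(a,b)` satisfies
`(Σ_T q^{r(T)}) (1−q)(1−q)(1−q²) = (1−q^{a+1})(1−q^{b+1})(1−q^{a+b+2})`. -/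
theorem A2_rank_generating_function (a b : ℕ) :
    (∑ᶠ T ∈ SA2 a b, (Polynomial.X : Polynomial ℤ) ^ rA2 T) *
        ((1 - Polynomial.X) * (1 - Polynomial.X) * (1 - Polynomial.X ^ 2)) =
      (1 - Polynomial.X ^ (a + 1)) * (1 - Polynomial.X ^ (b + 1)) *
        (1 - Polynomial.X ^ (a + b + 2)) := by
  have hinj : ∀ t ∈ Pset a b, ∀ t' ∈ Pset a b,
      (fun t : ℕ × ℕ × ℕ × ℕ => mkT a b t.1 t.2.1 t.2.2.1 t.2.2.2) t =
      (fun t : ℕ × ℕ × ℕ × ℕ => mkT a b t.1 t.2.1 t.2.2.1 t.2.2.2) t' → t = t' := by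
    intro t ht t' ht' heq
    rw [mem_Pset_iff] at ht ht'
    obtain ⟨z, x, p, r⟩ := t
    obtain ⟨z', x', p', r'⟩ := t'
    obtain ⟨e1, e2, e3, e4⟩ := mkT_inj_aux (by exact ht.1) (by exact ht.2.1)
      (by exact ht'.1) (by exact ht'.2.1) heq
    subst e1; subst e2; subst e3; subst e4
    rfl
  rw [SA2_eq a b, finsum_mem_coe_finset, Finset.sum_image hinj]
  trans (∑ t ∈ Pset a b, (X:Polynomial ℤ) ^ ((b - t.1 + t.2.1) + (2*t.2.2.1 + t.2.2.2))) *
      ((1 - X) * (1 - X) * (1 - X ^ 2))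
  · congr 1
    refine Finset.sum_congr rfl fun t ht => ?_
    rw [mem_Pset_iff] at ht
    rw [rA2_mkT ht.1 ht.2.1]
  · rw [sum_Pset]
    exact final_alg a b
end

section
/- For all integers a, b ≥ 0, the following identity holds in the polynomial ring ℤ[q]: (Σ_{T ∈ S_C2(a,b)} q^{r(T)}) · (1 − q)(1 − q)(1 − q²)(1 − q³) = (1 − q^{a+1})(1 − q^{b+1})(1 − q^{a+b+2})(1 − q^{a+2b+3}), where r(T) = Σ_{j=1}^{b} ((3 − T^(j)_1) + (4 − T^(j)_2)) + Σ_{j=b+1}^{a+b} (4 − T^(j)_1). -/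
open Polynomial

namespace C2aux


def Fam (s u t a b : ℕ) : Set (TabT a b) :=
  {T | T ∈ SC2 a b ∧ (∀ j : Fin b, s ≤ (T.1 j).1 ∧ u ≤ (T.1 j).2) ∧ ∀ i : Fin a, t ≤ T.2 i}

noncomputable def GF {a b : ℕ} (S : Set (TabT a b)) : Polynomial ℤ :=
  ∑ᶠ T ∈ S, (X : Polynomial ℤ) ^ rC2 T

lemma SC2_finite (a b : ℕ) : (SC2 a b).Finite := by
  have h : SC2 a b ⊆ (Set.univ.pi fun _ : Fin b => Set.Iic ((4 : ℕ), (4 : ℕ))) ×ˢ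
      (Set.univ.pi fun _ : Fin a => Set.Iic (4 : ℕ)) := by
    rintro T ⟨h1, h2, -⟩
    refine ⟨fun j _ => ?_, fun i _ => (h2 i).2⟩
    exact ⟨(h1 j).2.1, (h1 j).2.2.2.1⟩
  exact Set.Finite.subset (Set.Finite.prod (Set.Finite.pi fun _ => Set.finite_Iic _)
    (Set.Finite.pi fun _ => Set.finite_Iic _)) h

lemma Fam_sub (s u t a b : ℕ) : Fam s u t a b ⊆ SC2 a b := fun _ h => h.1

lemma Fam_finite (s u t a b : ℕ) : (Fam s u t a b).Finite :=
  (SC2_finite a b).subset (Fam_sub s u t a b)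

lemma mul_GF {a b : ℕ} {S : Set (TabT a b)} (hS : S.Finite) (w : ℕ) :
    (∑ᶠ T ∈ S, (X : Polynomial ℤ) ^ (w + rC2 T)) = X ^ w * GF S := by
  rw [GF, finsum_mem_eq_finite_toFinset_sum _ hS, finsum_mem_eq_finite_toFinset_sum _ hS,
    Finset.mul_sum]
  exact Finset.sum_congr rfl fun T _ => pow_add _ _ _

lemma GF_split {a b : ℕ} (S S2 : Set (TabT a b)) (P : TabT a b → Prop)
    (hfin : S.Finite) (hsub : S2 ⊆ S) (hsplit : ∀ T ∈ S, P T ∨ T ∈ S2)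
    (hdisj : ∀ T ∈ S2, ¬ P T) :
    GF S = GF {T | T ∈ S ∧ P T} + GF S2 := by
  have hU : S = {T | T ∈ S ∧ P T} ∪ S2 := by
    ext T
    constructor
    · intro hT
      rcases hsplit T hT with h | h
      · exact Or.inl ⟨hT, h⟩
      · exact Or.inr h
    · rintro (⟨h, -⟩ | h)
      · exact h
      · exact hsub h
  have hd : Disjoint {T | T ∈ S ∧ P T} S2 := by
    rw [Set.disjoint_left]
    rintro T ⟨-, hP⟩ h2
    exact hdisj T h2 hP
  conv_lhs => rw [hU]
  rw [GF, finsum_mem_union hd (hfin.subset fun T h => h.1) (hfin.subset hsub)]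
  rfl

lemma Fam_congr0 (s u s' u' t a : ℕ) : Fam s u t a 0 = Fam s' u' t a 0 := by
  ext T
  exact ⟨fun ⟨h1, _, h3⟩ => ⟨h1, fun j => j.elim0, h3⟩,
    fun ⟨h1, _, h3⟩ => ⟨h1, fun j => j.elim0, h3⟩⟩

lemma SC2_eq_Fam (a b : ℕ) : SC2 a b = Fam 1 2 1 a b := by
  ext T
  constructor
  · intro h
    refine ⟨h, fun j => ⟨(h.1 j).1, ?_⟩, fun i => (h.2.1 i).1⟩
    have := (h.1 j).1
    have := (h.1 j).2.2.2.2
    omega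
  · exact fun h => h.1


def prep {a b : ℕ} (c : ℕ × ℕ) (T : TabT a b) : TabT a (b + 1) :=
  (Fin.cases c T.1, T.2)

def dropc {a b : ℕ} (T : TabT a (b + 1)) : TabT a b :=
  (fun j => T.1 j.succ, T.2)

@[simp] lemma prep_zero {a b : ℕ} (c : ℕ × ℕ) (T : TabT a b) : (prep c T).1 0 = c := rfl

@[simp] lemma prep_succ {a b : ℕ} (c : ℕ × ℕ) (T : TabT a b) (j : Fin b) :
    (prep c T).1 j.succ = T.1 j := rfl

@[simp] lemma prep_snd {a b : ℕ} (c : ℕ × ℕ) (T : TabT a b) : (prep c T).2 = T.2 := rfl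

lemma dropc_prep {a b : ℕ} (c : ℕ × ℕ) (T : TabT a b) : dropc (prep c T) = T := rfl

lemma rC2_prep {a b : ℕ} (x y : ℕ) (T : TabT a b) :
    rC2 (prep (x, y) T) = ((3 - x) + (4 - y)) + rC2 T := by
  unfold rC2
  rw [Fin.sum_univ_succ]
  simp only [prep_zero, prep_succ, prep_snd]
  omega

lemma GF_firstcol (a b x y s u t u' : ℕ)
    (h1x : 1 ≤ x) (hxy : x < y) (hy4 : y ≤ 4) (h14 : ¬(x = 1 ∧ y = 4))
    (hsx : s ≤ x) (huy : u ≤ y) (hxt : x ≤ t)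
    (hcase : (¬(x = 2 ∧ y = 3) ∧ u' = y) ∨ (x = 2 ∧ y = 3 ∧ u' = 4)) :
    GF {T | T ∈ Fam s u t a (b + 1) ∧ T.1 0 = (x, y)}
      = (X : Polynomial ℤ) ^ ((3 - x) + (4 - y)) * GF (Fam x u' t a b) := by
  have hyu' : y ≤ u' := by rcases hcase with ⟨-, rfl⟩ | ⟨-, h3, h4⟩ <;> omega
  have key : ∑ᶠ T ∈ Fam x u' t a b, (X : Polynomial ℤ) ^ (((3 - x) + (4 - y)) + rC2 T)
      = ∑ᶠ T ∈ {T | T ∈ Fam s u t a (b + 1) ∧ T.1 0 = (x, y)},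
          (X : Polynomial ℤ) ^ rC2 T := by
    refine finsum_mem_eq_of_bijOn (prep (x, y)) ⟨?_, ?_, ?_⟩
      (fun T _ => by rw [rC2_prep])
    · -- MapsTo
      rintro T ⟨⟨c1, c2, c3, c4, c5, c6, c7⟩, hcol, hsing⟩
      refine ⟨⟨⟨?_, ?_, ?_, ?_, ?_, ?_, ?_⟩, ?_, ?_⟩, prep_zero _ _⟩
      · intro j
        refine Fin.cases ?_ (fun j1 => ?_) j
        · simp only [prep_zero]; omega
        · simpa only [prep_succ] using c1 j1
      · exact c2
      · intro j j'
        refine Fin.cases ?_ (fun j2 => ?_) j'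
        · intro hle
          have hj0 : j = 0 := Fin.le_zero_iff.mp hle
          rw [hj0]
          exact ⟨le_rfl, le_rfl⟩
        · refine Fin.cases ?_ (fun j1 => ?_) j
          · intro _
            simp only [prep_zero, prep_succ]
            exact ⟨(hcol j2).1, le_trans hyu' (hcol j2).2⟩
          · intro hle1
            simp only [prep_succ]
            exact c3 j1 j2 (by rwa [Fin.succ_le_succ_iff] at hle1)
      · exact c4
      · intro j i
        refine Fin.cases ?_ (fun j1 => ?_) j
        · simpa only [prep_zero, prep_snd] using le_trans hxt (hsing i)
        · simpa only [prep_succ, prep_snd] using c5 j1 i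
      · intro j
        refine Fin.cases ?_ (fun j1 => ?_) j
        · simp only [prep_zero, Ne, Prod.mk.injEq]
          exact h14
        · simpa only [prep_succ] using c6 j1
      · intro j j'
        refine Fin.cases ?_ (fun j1 => ?_) j <;> refine Fin.cases ?_ (fun j2 => ?_) j'
        · intro _ _; rfl
        · simp only [prep_zero, prep_succ, Prod.mk.injEq]
          rintro ⟨hx2, hy3⟩ h23
          rcases hcase with ⟨hne, -⟩ | ⟨-, -, hu4⟩
          · exact absurd ⟨hx2, hy3⟩ hne
          · have := (hcol j2).2
            rw [h23] at this
            omega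
        · simp only [prep_zero, prep_succ, Prod.mk.injEq]
          rintro h23 ⟨hx2, hy3⟩
          rcases hcase with ⟨hne, -⟩ | ⟨-, -, hu4⟩
          · exact absurd ⟨hx2, hy3⟩ hne
          · have := (hcol j1).2
            rw [h23] at this
            omega
        · simp only [prep_succ]
          intro h1 h2
          rw [c7 j1 j2 h1 h2]
      · intro j
        refine Fin.cases ?_ (fun j1 => ?_) j
        · simp only [prep_zero]
          exact ⟨hsx, huy⟩
        · simp only [prep_succ]
          exact ⟨le_trans hsx (hcol j1).1, le_trans huy (le_trans hyu' (hcol j1).2)⟩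
      · exact hsing
    · -- InjOn
      intro T _ T' _ h
      rw [← dropc_prep (x, y) T, ← dropc_prep (x, y) T', h]
    · -- SurjOn
      rintro T ⟨⟨⟨c1, c2, c3, c4, c5, c6, c7⟩, hcol, hsing⟩, h0⟩
      refine ⟨dropc T, ⟨⟨?_, c2, ?_, c4, ?_, ?_, ?_⟩, ?_, hsing⟩, ?_⟩
      · exact fun j => c1 j.succ
      · exact fun j j' h => c3 j.succ j'.succ (Fin.succ_le_succ_iff.mpr h)
      · exact fun j i => c5 j.succ i
      · exact fun j => c6 j.succ
      · exact fun j j' h1 h2 => Fin.succ_injective _ (c7 j.succ j'.succ h1 h2)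
      · intro j
        have hm := c3 0 j.succ (Fin.zero_le _)
        rw [h0] at hm
        refine ⟨hm.1, ?_⟩
        rcases hcase with ⟨-, rfl⟩ | ⟨hx2, hy3, hu4⟩
        · exact hm.2
        · subst hx2; subst hy3; rw [hu4]
          show 4 ≤ (T.1 j.succ).2
          by_contra hlt
          rcases hTj : T.1 j.succ with ⟨p, q⟩
          rw [hTj] at hm hlt
          have hb := c1 j.succ
          rw [hTj] at hb
          have hp : p = 2 := by simp at hm hb ⊢; omega
          have hq : q = 3 := by simp at hm hb hlt ⊢; omega
          subst hp; subst hq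
          exact absurd (c7 0 j.succ h0 hTj).symm (Fin.succ_ne_zero j)
      · -- prep (x,y) (dropc T) = T
        refine Prod.ext ?_ rfl
        funext j
        refine Fin.cases ?_ (fun j1 => ?_) j
        · rw [prep_zero, h0]
        · rfl
  rw [GF, ← key, mul_GF (Fam_finite x u' t a b)]


lemma pair_eq {p : ℕ × ℕ} {m n : ℕ} : p = (m, n) ↔ p.1 = m ∧ p.2 = n := Prod.ext_iff

/-! ### singles -/

def preps {a : ℕ} (e : ℕ) (T : TabT a 0) : TabT (a + 1) 0 :=
  (T.1, Fin.cases e T.2)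

def drops {a : ℕ} (T : TabT (a + 1) 0) : TabT a 0 :=
  (T.1, fun i => T.2 i.succ)

lemma drops_preps {a : ℕ} (e : ℕ) (T : TabT a 0) : drops (preps e T) = T := rfl

lemma rC2_preps {a : ℕ} (e : ℕ) (T : TabT a 0) :
    rC2 (preps e T) = (4 - e) + rC2 T := by
  unfold rC2 preps
  rw [Fin.sum_univ_succ]
  simp only [Fin.cases_zero, Fin.cases_succ]
  omega

lemma GF_firstsingle (a s u t : ℕ) (h1 : 1 ≤ t) (h4 : t ≤ 4) :
    GF {T | T ∈ Fam s u t (a + 1) 0 ∧ T.2 0 = t}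
      = (X : Polynomial ℤ) ^ (4 - t) * GF (Fam s u t a 0) := by
  have key : ∑ᶠ T ∈ Fam s u t a 0, (X : Polynomial ℤ) ^ ((4 - t) + rC2 T)
      = ∑ᶠ T ∈ {T | T ∈ Fam s u t (a + 1) 0 ∧ T.2 0 = t}, (X : Polynomial ℤ) ^ rC2 T := by
    refine finsum_mem_eq_of_bijOn (preps t) ⟨?_, ?_, ?_⟩ (fun T _ => by rw [rC2_preps])
    · rintro T ⟨⟨c1, c2, c3, c4, c5, c6, c7⟩, hcol, hsing⟩
      refine ⟨⟨⟨fun j => j.elim0, ?_, fun j => j.elim0, ?_, fun j => j.elim0,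
        fun j => j.elim0, fun j => j.elim0⟩, fun j => j.elim0, ?_⟩, rfl⟩
      · intro i
        refine Fin.cases ?_ (fun i1 => ?_) i
        · exact ⟨h1, h4⟩
        · exact c2 i1
      · intro i i'
        refine Fin.cases ?_ (fun i2 => ?_) i'
        · intro hle
          have : i = 0 := Fin.le_zero_iff.mp hle
          rw [this]
        · refine Fin.cases ?_ (fun i1 => ?_) i
          · intro _
            exact hsing i2
          · intro hle
            exact c4 i1 i2 (by rwa [Fin.succ_le_succ_iff] at hle)
      · intro i
        refine Fin.cases ?_ (fun i1 => ?_) i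
        · exact le_rfl
        · exact hsing i1
    · intro T _ T' _ h
      rw [← drops_preps t T, ← drops_preps t T', h]
    · rintro T ⟨⟨⟨c1, c2, c3, c4, c5, c6, c7⟩, hcol, hsing⟩, h0⟩
      refine ⟨drops T, ⟨⟨fun j => j.elim0, fun i => c2 i.succ, fun j => j.elim0,
        fun i i' h => c4 i.succ i'.succ (Fin.succ_le_succ_iff.mpr h), fun j => j.elim0,
        fun j => j.elim0, fun j => j.elim0⟩, fun j => j.elim0, fun i => hsing i.succ⟩, ?_⟩
      refine Prod.ext rfl ?_
      funext i
      refine Fin.cases ?_ (fun i1 => ?_) i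
      · rw [show (preps t (drops T)).2 0 = t from rfl, h0]
      · rfl
  rw [GF, ← key, mul_GF (Fam_finite s u t a 0)]

lemma GF_t4 (a s u : ℕ) : GF (Fam s u 4 a 0) = 1 := by
  have hset : Fam s u 4 a 0 = {((fun j => j.elim0, fun _ => 4) : TabT a 0)} := by
    ext T
    constructor
    · rintro ⟨⟨-, c2, -⟩, -, hsing⟩
      refine Prod.ext (funext fun j => j.elim0) (funext fun i => ?_)
      have := (c2 i).2
      have := hsing i
      simp only
      omega
    · rintro rfl
      exact ⟨⟨fun j => j.elim0, fun i => by norm_num, fun j => j.elim0,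
        fun i i' _ => le_rfl, fun j => j.elim0, fun j => j.elim0, fun j => j.elim0⟩,
        fun j => j.elim0, fun i => le_rfl⟩
  rw [GF, hset, finsum_mem_singleton]
  have : rC2 ((fun j => j.elim0, fun _ => 4) : TabT a 0) = 0 := by
    simp [rC2]
  rw [this, pow_zero]

lemma GF_00 (s u t : ℕ) : GF (Fam s u t 0 0) = 1 := by
  have hset : Fam s u t 0 0 = {((fun j => j.elim0, fun i => i.elim0) : TabT 0 0)} := by
    ext T
    constructor
    · rintro -
      exact Prod.ext (funext fun j => j.elim0) (funext fun i => i.elim0)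
    · rintro rfl
      exact ⟨⟨fun j => j.elim0, fun i => i.elim0, fun j => j.elim0, fun i => i.elim0,
        fun j => j.elim0, fun j => j.elim0, fun j => j.elim0⟩,
        fun j => j.elim0, fun i => i.elim0⟩
  rw [GF, hset, finsum_mem_singleton]
  have : rC2 ((fun j => j.elim0, fun i => i.elim0) : TabT 0 0) = 0 := by
    simp [rC2]
  rw [this, pow_zero]

lemma E_rec (s u t a : ℕ) (h1 : 1 ≤ t) (h3 : t ≤ 3) :
    GF (Fam s u t (a + 1) 0)
      = (X : Polynomial ℤ) ^ (4 - t) * GF (Fam s u t a 0) + GF (Fam s u (t + 1) (a + 1) 0) := by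
  rw [GF_split (Fam s u t (a + 1) 0) (Fam s u (t + 1) (a + 1) 0) (fun T => T.2 0 = t)
      (Fam_finite _ _ _ _ _) ?_ ?_ ?_, GF_firstsingle a s u t h1 (by omega)]
  · rintro T ⟨hS, hc, hs'⟩
    exact ⟨hS, hc, fun i => by have := hs' i; omega⟩
  · intro T hT
    obtain ⟨⟨c1, c2, c3, c4, c5, c6, c7⟩, hcol, hsing⟩ := hT
    by_cases h : T.2 0 = t
    · exact Or.inl h
    · refine Or.inr ⟨⟨c1, c2, c3, c4, c5, c6, c7⟩, hcol, fun i => ?_⟩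
      have := c4 0 i (Fin.zero_le _)
      have := hsing 0
      omega
  · rintro T ⟨-, -, hs'⟩ h0
    have := hs' 0
    omega

/-! ### column recurrences -/

lemma R1 (a b : ℕ) : GF (Fam 1 2 1 a (b + 1))
    = (X : Polynomial ℤ) ^ 4 * GF (Fam 1 2 1 a b) + GF (Fam 1 3 1 a (b + 1)) := by
  rw [GF_split (Fam 1 2 1 a (b + 1)) (Fam 1 3 1 a (b + 1)) (fun T => T.1 0 = (1, 2))
      (Fam_finite _ _ _ _ _) ?_ ?_ ?_,
    GF_firstcol a b 1 2 1 2 1 2 (by omega) (by omega) (by omega) (by omega) (by omega)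
      (by omega) (by omega) (Or.inl ⟨by omega, rfl⟩)]
  · rintro T ⟨hS, hc, hs'⟩
    exact ⟨hS, fun j => ⟨(hc j).1, by have := (hc j).2; omega⟩, hs'⟩
  · intro T hT
    obtain ⟨⟨c1, c2, c3, c4, c5, c6, c7⟩, hcol, hsing⟩ := hT
    by_cases h : (T.1 0).2 ≤ 2
    · refine Or.inl (pair_eq.mpr ⟨?_, ?_⟩) <;> have := c1 0 <;> omega
    · refine Or.inr ⟨⟨c1, c2, c3, c4, c5, c6, c7⟩, fun j => ⟨(c1 j).1, ?_⟩, hsing⟩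
      have := (c3 0 j (Fin.zero_le _)).2
      omega
  · rintro T ⟨-, hc, -⟩ h0
    have := (hc 0).2
    rw [h0] at this
    exact absurd this (by norm_num)

lemma R2 (a b : ℕ) : GF (Fam 1 3 1 a (b + 1))
    = (X : Polynomial ℤ) ^ 3 * GF (Fam 1 3 1 a b) + GF (Fam 2 3 2 a (b + 1)) := by
  rw [GF_split (Fam 1 3 1 a (b + 1)) (Fam 2 3 2 a (b + 1)) (fun T => T.1 0 = (1, 3))
      (Fam_finite _ _ _ _ _) ?_ ?_ ?_,
    GF_firstcol a b 1 3 1 3 1 3 (by omega) (by omega) (by omega) (by omega) (by omega)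
      (by omega) (by omega) (Or.inl ⟨by omega, rfl⟩)]
  · rintro T ⟨hS, hc, -⟩
    exact ⟨hS, fun j => ⟨by have := (hc j).1; omega, (hc j).2⟩, fun i => (hS.2.1 i).1⟩
  · intro T hT
    obtain ⟨⟨c1, c2, c3, c4, c5, c6, c7⟩, hcol, hsing⟩ := hT
    by_cases h : (T.1 0).1 ≤ 1
    · have hb3 : 3 ≤ (T.1 0).2 := (hcol 0).2
      have hb4 : (T.1 0).2 ≤ 4 := (c1 0).2.2.2.1
      have hne : ¬((T.1 0).1 = 1 ∧ (T.1 0).2 = 4) := fun hh => c6 0 (pair_eq.mpr hh)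
      refine Or.inl (pair_eq.mpr ⟨?_, ?_⟩) <;> have := (c1 0).1 <;> omega
    · refine Or.inr ⟨⟨c1, c2, c3, c4, c5, c6, c7⟩, fun j => ⟨?_, (hcol j).2⟩, fun i => ?_⟩
      · have := (c3 0 j (Fin.zero_le _)).1
        omega
      · have := c5 0 i
        omega
  · rintro T ⟨-, hc, -⟩ h0
    have := (hc 0).1
    rw [h0] at this
    exact absurd this (by norm_num)

lemma R3 (a b : ℕ) : GF (Fam 2 3 2 a (b + 1))
    = (X : Polynomial ℤ) ^ 2 * GF (Fam 2 4 2 a b) + GF (Fam 2 4 2 a (b + 1)) := by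
  rw [GF_split (Fam 2 3 2 a (b + 1)) (Fam 2 4 2 a (b + 1)) (fun T => T.1 0 = (2, 3))
      (Fam_finite _ _ _ _ _) ?_ ?_ ?_,
    GF_firstcol a b 2 3 2 3 2 4 (by omega) (by omega) (by omega) (by omega) (by omega)
      (by omega) (by omega) (Or.inr ⟨rfl, rfl, rfl⟩)]
  · rintro T ⟨hS, hc, hs'⟩
    exact ⟨hS, fun j => ⟨(hc j).1, by have := (hc j).2; omega⟩, hs'⟩
  · intro T hT
    obtain ⟨⟨c1, c2, c3, c4, c5, c6, c7⟩, hcol, hsing⟩ := hT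
    by_cases h : (T.1 0).2 ≤ 3
    · have h2 : 2 ≤ (T.1 0).1 := (hcol 0).1
      have := (c1 0).2.2.2.2
      have := (hcol 0).2
      refine Or.inl (pair_eq.mpr ⟨by omega, by omega⟩)
    · refine Or.inr ⟨⟨c1, c2, c3, c4, c5, c6, c7⟩, fun j => ⟨(hcol j).1, ?_⟩, hsing⟩
      have := (c3 0 j (Fin.zero_le _)).2
      omega
  · rintro T ⟨-, hc, -⟩ h0
    have := (hc 0).2
    rw [h0] at this
    exact absurd this (by norm_num)

lemma R4 (a b : ℕ) : GF (Fam 2 4 2 a (b + 1))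
    = (X : Polynomial ℤ) ^ 1 * GF (Fam 2 4 2 a b) + GF (Fam 3 4 3 a (b + 1)) := by
  rw [GF_split (Fam 2 4 2 a (b + 1)) (Fam 3 4 3 a (b + 1)) (fun T => T.1 0 = (2, 4))
      (Fam_finite _ _ _ _ _) ?_ ?_ ?_,
    GF_firstcol a b 2 4 2 4 2 4 (by omega) (by omega) (by omega) (by omega) (by omega)
      (by omega) (by omega) (Or.inl ⟨by omega, rfl⟩)]
  · rintro T ⟨hS, hc, hs'⟩
    exact ⟨hS, fun j => ⟨by have := (hc j).1; omega, (hc j).2⟩, fun i => by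
      have := hs' i; omega⟩
  · intro T hT
    obtain ⟨⟨c1, c2, c3, c4, c5, c6, c7⟩, hcol, hsing⟩ := hT
    by_cases h : (T.1 0).1 ≤ 2
    · have h2 : 2 ≤ (T.1 0).1 := (hcol 0).1
      have := (hcol 0).2
      have := (c1 0).2.2.2.1
      refine Or.inl (pair_eq.mpr ⟨by omega, by omega⟩)
    · refine Or.inr ⟨⟨c1, c2, c3, c4, c5, c6, c7⟩, fun j => ⟨?_, (hcol j).2⟩, fun i => ?_⟩
      · have := (c3 0 j (Fin.zero_le _)).1
        omega
      · have := c5 0 i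
        omega
  · rintro T ⟨-, hc, -⟩ h0
    have := (hc 0).1
    rw [h0] at this
    exact absurd this (by norm_num)

lemma R5 (a b : ℕ) : GF (Fam 3 4 3 a (b + 1)) = GF (Fam 3 4 3 a b) := by
  have h0 : GF (∅ : Set (TabT a (b + 1))) = 0 := by
    rw [GF, finsum_mem_empty]
  rw [GF_split (Fam 3 4 3 a (b + 1)) ∅ (fun T => T.1 0 = (3, 4))
      (Fam_finite _ _ _ _ _) (Set.empty_subset _) ?_ (fun T h => absurd h (Set.notMem_empty T)),
    GF_firstcol a b 3 4 3 4 3 4 (by omega) (by omega) (by omega) (by omega) (by omega)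
      (by omega) (by omega) (Or.inl ⟨by omega, rfl⟩), h0, add_zero]
  · norm_num
  · intro T hT
    obtain ⟨⟨c1, c2, c3, c4, c5, c6, c7⟩, hcol, hsing⟩ := hT
    have := (hcol 0).1
    have := (hcol 0).2
    have := (c1 0).2.2.2.1
    have := (c1 0).2.2.2.2
    exact Or.inl (pair_eq.mpr ⟨by omega, by omega⟩)


lemma E3closed (a : ℕ) :
    GF (Fam 3 4 3 a 0) * (1 - X) = 1 - (X : Polynomial ℤ) ^ (a + 1) := by
  induction a with
  | zero => rw [GF_00]; ring
  | succ a ih =>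
    rw [E_rec 3 4 3 a (by norm_num) (by norm_num), GF_t4]
    linear_combination (X : Polynomial ℤ) ^ (4 - 3) * ih

lemma E2closed (a : ℕ) :
    GF (Fam 3 4 2 a 0) * ((1 - X) * (1 - X ^ 2))
      = (1 - (X : Polynomial ℤ) ^ (a + 1)) * (1 - X ^ (a + 2)) := by
  induction a with
  | zero => rw [GF_00]; ring
  | succ a ih =>
    rw [E_rec 3 4 2 a (by norm_num) (by norm_num)]
    have h3 := E3closed (a + 1)
    linear_combination (X : Polynomial ℤ) ^ (4 - 2) * ih + (1 - (X : Polynomial ℤ) ^ 2) * h3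

lemma E1closed (a : ℕ) :
    GF (Fam 3 4 1 a 0) * ((1 - X) * (1 - X ^ 2) * (1 - X ^ 3))
      = (1 - (X : Polynomial ℤ) ^ (a + 1)) * (1 - X ^ (a + 2)) * (1 - X ^ (a + 3)) := by
  induction a with
  | zero => rw [GF_00]; ring
  | succ a ih =>
    rw [E_rec 3 4 1 a (by norm_num) (by norm_num)]
    have h2 := E2closed (a + 1)
    linear_combination (X : Polynomial ℤ) ^ (4 - 1) * ih
      + (1 - (X : Polynomial ℤ) ^ 3) * h2

lemma F5closed (a b : ℕ) :
    GF (Fam 3 4 3 a b) * (1 - X) = 1 - (X : Polynomial ℤ) ^ (a + 1) := by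
  induction b with
  | zero => exact E3closed a
  | succ b ih => rw [R5]; exact ih

lemma F4closed (a b : ℕ) :
    GF (Fam 2 4 2 a b) * ((1 - X) * (1 - X ^ 2))
      = X ^ b * ((1 - (X : Polynomial ℤ) ^ (a + 1)) * (1 - X ^ (a + 2)))
        + (1 - X ^ (a + 1)) * (1 - X ^ b) * (1 + X) := by
  induction b with
  | zero =>
    rw [Fam_congr0 2 4 3 4 2 a]
    linear_combination E2closed a
  | succ b ih =>
    rw [R4]
    have h5 := F5closed a (b + 1)
    linear_combination (X : Polynomial ℤ) ^ 1 * ih + (1 - (X : Polynomial ℤ) ^ 2) * h5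

noncomputable def Uc (a : ℕ) : Polynomial ℤ :=
  -(X * (1 - X ^ (a + 1)) * (1 - X ^ 3) * (1 + X ^ (a + 1)))
noncomputable def Vc (a : ℕ) : Polynomial ℤ :=
  (1 - X ^ (a + 1)) * (1 - X ^ 2) * (1 + X ^ 2)
noncomputable def Wc (a : ℕ) : Polynomial ℤ :=
  (1 - X ^ (a + 1)) * ((1 - X ^ (a + 2)) * (1 - X ^ (a + 3)) * (1 - X)
    + X * (1 - X ^ 3) * (1 + X ^ (a + 1)) - (1 - X ^ 2) * (1 + X ^ 2))

lemma F2closed (a b : ℕ) :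
    GF (Fam 1 3 1 a b) * ((1 - X) * (1 - X) * (1 - X ^ 2) * (1 - X ^ 3))
      = Uc a * X ^ b + Vc a + Wc a * (X ^ b) ^ 3 := by
  induction b with
  | zero =>
    rw [Fam_congr0 1 3 3 4 1 a]
    unfold Uc Vc Wc
    linear_combination (1 - (X : Polynomial ℤ)) * E1closed a
  | succ b ih =>
    rw [R2, R3]
    have h4b := F4closed a b
    have h4b1 := F4closed a (b + 1)
    unfold Uc Vc Wc at *
    linear_combination (X : Polynomial ℤ) ^ 3 * ih
      + ((X : Polynomial ℤ) ^ 2 * (1 - X) * (1 - X ^ 3)) * h4b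
      + ((1 - (X : Polynomial ℤ)) * (1 - X ^ 3)) * h4b1

lemma Fclosed (a b : ℕ) :
    GF (Fam 1 2 1 a b) * ((1 - X) * (1 - X) * (1 - X ^ 2) * (1 - X ^ 3))
      = (1 - (X : Polynomial ℤ) ^ (a + 1)) * (1 - X ^ (b + 1)) *
        (1 - X ^ (a + b + 2)) * (1 - X ^ (a + 2 * b + 3)) := by
  induction b with
  | zero =>
    rw [Fam_congr0 1 2 3 4 1 a]
    linear_combination (1 - (X : Polynomial ℤ)) * E1closed a
  | succ b ih =>
    rw [R1]
    have h2 := F2closed a (b + 1)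
    unfold Uc Vc Wc at h2
    linear_combination (X : Polynomial ℤ) ^ 4 * ih + h2


end C2aux

/-- The rank generating function of the lattice of `C2`-semistandard tableaux of
shape `(a,b)` satisfies
`(Σ_T q^{r(T)}) (1−q)(1−q)(1−q²)(1−q³)
  = (1−q^{a+1})(1−q^{b+1})(1−q^{a+b+2})(1−q^{a+2b+3})`. -/
theorem C2_rank_generating_function (a b : ℕ) :
    (∑ᶠ T ∈ SC2 a b, (Polynomial.X : Polynomial ℤ) ^ rC2 T) *
        ((1 - Polynomial.X) * (1 - Polynomial.X) * (1 - Polynomial.X ^ 2) *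
          (1 - Polynomial.X ^ 3)) =
      (1 - Polynomial.X ^ (a + 1)) * (1 - Polynomial.X ^ (b + 1)) *
        (1 - Polynomial.X ^ (a + b + 2)) * (1 - Polynomial.X ^ (a + 2 * b + 3)) := by
  have h := C2aux.Fclosed a b
  rw [← C2aux.SC2_eq_Fam a b] at h
  exact h
end
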